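/- arXiv:2412.05706 — 2 statements merged into one kernel-verified Lean document; each statement's English description precedes it below -/
import Mathlib

section
/- For every dimension d ≥ 7 there exists a constant C > 0 such that for all x, y ∈ ℤ^d, the sum over z ∈ ℤ^d of (max(|x−z|,1))^{2−d} · (max(|z−y|,1))^{2−d} is at most C · (max(|x−y|,1))^{4−d}, where |·| denotes the Euclidean norm. -/
open scoped BigOperators

/-- The Euclidean norm of a point of the integer lattice `ℤ^d`. -/
noncomputable def latNorm {d : ℕ} (x : Fin d → ℤ) : ℝ :=
  Real.sqrt (∑ i, ((x i : ℝ)) ^ 2)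

namespace ConvAux

open Finset

variable {d : ℕ}

/-- sup-norm of a lattice vector, as a natural number -/
def nn (w : Fin d → ℤ) : ℕ := Finset.univ.sup fun i => (w i).natAbs

noncomputable def mx (k : ℕ) : ℝ := max (k : ℝ) 1

lemma one_le_mx (k : ℕ) : 1 ≤ mx k := le_max_right _ _
lemma mx_pos (k : ℕ) : 0 < mx k := lt_of_lt_of_le one_pos (one_le_mx k)
lemma mx_nonneg (k : ℕ) : 0 ≤ mx k := (mx_pos k).le
lemma mx_le_mx {j k : ℕ} (h : j ≤ k) : mx j ≤ mx k :=
  max_le_max (by exact_mod_cast h) le_rfl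
lemma mx_eq_cast (k : ℕ) : mx k = ((max k 1 : ℕ) : ℝ) := by
  simp [mx, Nat.cast_max]

lemma nn_apply_le (w : Fin d → ℤ) (i : Fin d) : (w i).natAbs ≤ nn w :=
  Finset.le_sup (f := fun i => (w i).natAbs) (Finset.mem_univ i)

lemma nn_sub_comm (u v : Fin d → ℤ) : nn (u - v) = nn (v - u) := by
  unfold nn
  congr 1
  funext i
  have : (u i - v i).natAbs = (v i - u i).natAbs := by omega
  simpa [Pi.sub_apply] using this

lemma nn_triangle (u v w : Fin d → ℤ) : nn (u - w) ≤ nn (u - v) + nn (v - w) := by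
  unfold nn
  apply Finset.sup_le
  intro i _
  have h1 : (u i - v i).natAbs ≤ Finset.univ.sup fun j => ((u - v) j).natAbs := by
    exact nn_apply_le (u - v) i
  have h2 : (v i - w i).natAbs ≤ Finset.univ.sup fun j => ((v - w) j).natAbs := by
    exact nn_apply_le (v - w) i
  have h0 : ((u - w) i).natAbs = (u i - w i).natAbs := by simp [Pi.sub_apply]
  rw [h0]
  have : (u i - w i).natAbs ≤ (u i - v i).natAbs + (v i - w i).natAbs := by omega
  omega

lemma nn_le_latNorm (hd : 0 < d) (w : Fin d → ℤ) : (nn w : ℝ) ≤ latNorm w := by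
  haveI : Nonempty (Fin d) := ⟨⟨0, hd⟩⟩
  obtain ⟨i, -, hi⟩ := Finset.exists_mem_eq_sup Finset.univ Finset.univ_nonempty
    (fun i => (w i).natAbs)
  have h1 : (nn w : ℝ) = |((w i : ℝ))| := by
    rw [show nn w = (w i).natAbs from hi]
    rw [Nat.cast_natAbs, Int.cast_abs]
  rw [h1, latNorm, ← Real.sqrt_sq_eq_abs]
  apply Real.sqrt_le_sqrt
  exact Finset.single_le_sum (f := fun j => ((w j : ℝ))^2) (fun j _ => sq_nonneg _)
    (Finset.mem_univ i)

lemma mx_nn_le_maxlat (hd : 0 < d) (w : Fin d → ℤ) :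
    mx (nn w) ≤ max (latNorm w) 1 :=
  max_le_max (nn_le_latNorm hd w) le_rfl

lemma latNorm_le (w : Fin d → ℤ) : latNorm w ≤ Real.sqrt d * nn w := by
  rw [latNorm]
  have h : (∑ i, ((w i : ℝ)) ^ 2) ≤ (d : ℝ) * (nn w : ℝ) ^ 2 := by
    calc (∑ i, ((w i : ℝ)) ^ 2) ≤ ∑ _i : Fin d, (nn w : ℝ) ^ 2 := by
          apply Finset.sum_le_sum
          intro i _
          have : ((w i).natAbs : ℝ) ≤ (nn w : ℝ) := by exact_mod_cast nn_apply_le w i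
          have habs : |((w i : ℝ))| = ((w i).natAbs : ℝ) := by
            rw [Nat.cast_natAbs, Int.cast_abs]
          calc ((w i : ℝ)) ^ 2 = |((w i : ℝ))| ^ 2 := (sq_abs _).symm
            _ ≤ (nn w : ℝ) ^ 2 := by
                apply pow_le_pow_left₀ (abs_nonneg _)
                rw [habs]; exact this
      _ = (d : ℝ) * (nn w : ℝ) ^ 2 := by
          rw [Finset.sum_const, Finset.card_univ, Fintype.card_fin, nsmul_eq_mul]
  calc Real.sqrt (∑ i, ((w i : ℝ)) ^ 2) ≤ Real.sqrt ((d : ℝ) * (nn w : ℝ) ^ 2) :=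
        Real.sqrt_le_sqrt h
    _ = Real.sqrt d * nn w := by
        rw [Real.sqrt_mul (Nat.cast_nonneg d), Real.sqrt_sq (Nat.cast_nonneg _)]

lemma maxlat_le (hd : 0 < d) (w : Fin d → ℤ) :
    max (latNorm w) 1 ≤ (d : ℝ) * mx (nn w) := by
  have hd1 : (1 : ℝ) ≤ d := by exact_mod_cast hd
  apply max_le
  · calc latNorm w ≤ Real.sqrt d * nn w := latNorm_le w
      _ ≤ (d : ℝ) * mx (nn w) := by
          have hsq : Real.sqrt d ≤ (d : ℝ) := by
            calc Real.sqrt d ≤ Real.sqrt ((d:ℝ)^2) := Real.sqrt_le_sqrt (by nlinarith)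
              _ = (d : ℝ) := Real.sqrt_sq (Nat.cast_nonneg _)
          apply mul_le_mul hsq (le_max_left _ _)
            (Nat.cast_nonneg _) (Nat.cast_nonneg _)
  · calc (1 : ℝ) = 1 * 1 := (one_mul 1).symm
      _ ≤ (d : ℝ) * mx (nn w) := mul_le_mul hd1 (one_le_mx _) one_pos.le (Nat.cast_nonneg _)


open Finset

variable {d : ℕ}

noncomputable def c1 (d : ℕ) : ℝ := 2 * d * 3 ^ (d - 1)

lemma c1_pos (hd : 0 < d) : 0 < c1 d := by
  unfold c1
  positivity

noncomputable def box (d K : ℕ) : Finset (Fin d → ℤ) :=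
  Fintype.piFinset fun _ => Finset.Icc (-(K : ℤ)) K

lemma mem_box {K : ℕ} {w : Fin d → ℤ} : w ∈ box d K ↔ nn w ≤ K := by
  rw [box, Fintype.mem_piFinset, nn]
  constructor
  · intro h
    apply Finset.sup_le
    intro i _
    have := h i
    rw [Finset.mem_Icc] at this
    omega
  · intro h i
    have : (w i).natAbs ≤ K := le_trans (nn_apply_le w i) h
    rw [Finset.mem_Icc]
    omega

lemma card_box (K : ℕ) : (box d K).card = (2 * K + 1) ^ d := by
  rw [box, Fintype.card_piFinset]
  rw [Finset.prod_const, Finset.card_univ, Fintype.card_fin]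
  congr 1
  rw [Int.card_Icc]
  omega

lemma box_mono {K L : ℕ} (h : K ≤ L) : box d K ⊆ box d L := by
  intro w hw
  rw [mem_box] at *
  omega

lemma card_shell_le (hd : 0 < d) (K k : ℕ) :
    (((box d K).filter fun w => nn w = k).card : ℝ) ≤ c1 d * mx k ^ (d - 1) := by
  have hc1 : (1 : ℝ) ≤ c1 d := by
    unfold c1
    have h3 : (1 : ℝ) ≤ 3 ^ (d - 1) := by
      calc (1 : ℝ) = 1 ^ (d - 1) := (one_pow _).symm
        _ ≤ 3 ^ (d - 1) := pow_le_pow_left₀ (by norm_num) (by norm_num) _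
    have hd1 : (1 : ℝ) ≤ 2 * d := by
      have : (1 : ℝ) ≤ (d : ℝ) := by exact_mod_cast hd
      linarith
    nlinarith
  rcases Nat.eq_zero_or_pos k with hk | hk
  · have hcard : ((box d K).filter fun w => nn w = k).card ≤ 1 := by
      apply Finset.card_le_one.mpr
      intro a ha b hb
      rw [Finset.mem_filter] at ha hb
      funext i
      have ha1 := nn_apply_le a i
      have hb1 := nn_apply_le b i
      rw [ha.2, hk] at ha1
      rw [hb.2, hk] at hb1
      omega
    have hmx : mx k ^ (d - 1) = 1 := by
      have : mx k = 1 := by simp [mx, hk]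
      rw [this, one_pow]
    rw [hmx, mul_one]
    calc (((box d K).filter fun w => nn w = k).card : ℝ) ≤ 1 := by exact_mod_cast hcard
      _ ≤ c1 d := hc1
  -- k ≥ 1
  · have hsub : ((box d K).filter fun w => nn w = k) ⊆ box d k \ box d (k - 1) := by
      intro w hw
      rw [Finset.mem_filter] at hw
      rw [Finset.mem_sdiff, mem_box, mem_box]
      omega
    have hsub2 : box d (k - 1) ⊆ box d k := box_mono (by omega)
    have hcard : ((box d K).filter fun w => nn w = k).card ≤
        (2 * k + 1) ^ d - (2 * (k - 1) + 1) ^ d := by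
      calc ((box d K).filter fun w => nn w = k).card ≤ (box d k \ box d (k - 1)).card :=
            Finset.card_le_card hsub
        _ = (box d k).card - (box d (k - 1)).card := Finset.card_sdiff_of_subset hsub2
        _ = (2 * k + 1) ^ d - (2 * (k - 1) + 1) ^ d := by rw [card_box, card_box]
    -- pass to the reals
    set a : ℝ := 2 * k + 1 with ha
    set b : ℝ := 2 * (k - 1 : ℕ) + 1 with hb
    have hba : b ≤ a := by
      rw [ha, hb]
      have : ((k - 1 : ℕ) : ℝ) ≤ (k : ℝ) := by exact_mod_cast Nat.sub_le k 1
      linarith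
    have hb0 : 0 ≤ b := by positivity
    have ha0 : 0 ≤ a := by positivity
    have hcast : (((2 * k + 1) ^ d - (2 * (k - 1) + 1) ^ d : ℕ) : ℝ) = a ^ d - b ^ d := by
      rw [Nat.cast_sub (Nat.pow_le_pow_left (by omega) d)]
      push_cast
      rw [ha, hb]
    have hdiff : a ^ d - b ^ d ≤ 2 * d * a ^ (d - 1) := by
      have hgeom := geom_sum₂_mul a b d
      rw [← hgeom]
      have hab : a - b ≤ 2 := by
        rw [ha, hb]
        have : (k : ℝ) - 1 ≤ ((k - 1 : ℕ) : ℝ) := by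
          have : ((k - 1 : ℕ) : ℝ) = (k : ℝ) - 1 := by
            have : (1 : ℕ) ≤ k := hk
            push_cast [Nat.cast_sub this]
            ring
          linarith [this.ge]
        linarith
      have hsum : (∑ i ∈ Finset.range d, a ^ i * b ^ (d - 1 - i)) ≤ d * a ^ (d - 1) := by
        calc (∑ i ∈ Finset.range d, a ^ i * b ^ (d - 1 - i))
            ≤ ∑ _i ∈ Finset.range d, a ^ (d - 1) := by
              apply Finset.sum_le_sum
              intro i hi
              rw [Finset.mem_range] at hi
              calc a ^ i * b ^ (d - 1 - i) ≤ a ^ i * a ^ (d - 1 - i) := by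
                    apply mul_le_mul_of_nonneg_left (pow_le_pow_left₀ hb0 hba _)
                      (pow_nonneg ha0 i)
                _ = a ^ (i + (d - 1 - i)) := (pow_add a i (d - 1 - i)).symm
                _ = a ^ (d - 1) := by congr 1; omega
          _ = d * a ^ (d - 1) := by
              rw [Finset.sum_const, Finset.card_range, nsmul_eq_mul]
      have hsumnn : 0 ≤ ∑ i ∈ Finset.range d, a ^ i * b ^ (d - 1 - i) := by
        apply Finset.sum_nonneg
        intro i _
        positivity
      have habnn : 0 ≤ a - b := by linarith
      calc (∑ i ∈ Finset.range d, a ^ i * b ^ (d - 1 - i)) * (a - b)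
          ≤ (d * a ^ (d - 1)) * 2 := by
            apply mul_le_mul hsum hab habnn
            positivity
        _ = 2 * d * a ^ (d - 1) := by ring
    have hak : a ≤ 3 * mx k := by
      rw [ha]
      have h1 : (1 : ℝ) ≤ (k : ℝ) := by exact_mod_cast hk
      have : mx k = (k : ℝ) := max_eq_left h1
      rw [this]
      linarith
    have hfin : 2 * d * a ^ (d - 1) ≤ c1 d * mx k ^ (d - 1) := by
      unfold c1
      have : a ^ (d - 1) ≤ (3 * mx k) ^ (d - 1) := pow_le_pow_left₀ ha0 hak _
      have h3 : (3 * mx k) ^ (d - 1) = 3 ^ (d - 1) * mx k ^ (d - 1) := mul_pow 3 (mx k) _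
      have hd0 : (0 : ℝ) ≤ 2 * d := by positivity
      calc 2 * d * a ^ (d - 1) ≤ 2 * d * (3 ^ (d - 1) * mx k ^ (d - 1)) := by
            rw [← h3]; exact mul_le_mul_of_nonneg_left this hd0
        _ = 2 * d * 3 ^ (d - 1) * mx k ^ (d - 1) := by ring
    calc (((box d K).filter fun w => nn w = k).card : ℝ)
        ≤ (((2 * k + 1) ^ d - (2 * (k - 1) + 1) ^ d : ℕ) : ℝ) := by exact_mod_cast hcard
      _ = a ^ d - b ^ d := hcast
      _ ≤ 2 * d * a ^ (d - 1) := hdiff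
      _ ≤ c1 d * mx k ^ (d - 1) := hfin


open Finset

variable {d : ℕ}

lemma sum_box_le (hd : 0 < d) (g : ℕ → ℝ) (hg : ∀ k, 0 ≤ g k) (K : ℕ) :
    ∑ w ∈ box d K, g (nn w) ≤ ∑ k ∈ Finset.range (K + 1), c1 d * mx k ^ (d - 1) * g k := by
  rw [Finset.sum_comp (fun k => g k) (fun w => nn w)]
  have himg : (box d K).image (fun w => nn w) ⊆ Finset.range (K + 1) := by
    intro k hk
    rw [Finset.mem_image] at hk
    obtain ⟨w, hw, hwk⟩ := hk
    rw [mem_box] at hw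
    rw [Finset.mem_range]
    omega
  calc ∑ k ∈ (box d K).image (fun w => nn w),
        (((box d K).filter fun w => nn w = k).card) • g k
      ≤ ∑ k ∈ (box d K).image (fun w => nn w), c1 d * mx k ^ (d - 1) * g k := by
        apply Finset.sum_le_sum
        intro k _
        rw [nsmul_eq_mul]
        exact mul_le_mul_of_nonneg_right (card_shell_le hd K k) (hg k)
    _ ≤ ∑ k ∈ Finset.range (K + 1), c1 d * mx k ^ (d - 1) * g k := by
        apply Finset.sum_le_sum_of_subset_of_nonneg himg
        intro k _ _
        have := hg k
        have := (c1_pos hd).le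
        have := mx_nonneg k
        positivity

lemma master (hd : 0 < d) (x : Fin d → ℤ) (g : ℕ → ℝ) (hg : ∀ k, 0 ≤ g k) {c : ℝ}
    (hb : ∀ N, ∑ k ∈ Finset.range (N + 1), c1 d * mx k ^ (d - 1) * g k ≤ c) :
    Summable (fun z : Fin d → ℤ => g (nn (x - z))) ∧
      (∑' z : Fin d → ℤ, g (nn (x - z))) ≤ c := by
  have key : ∀ u : Finset (Fin d → ℤ), ∑ z ∈ u, g (nn (x - z)) ≤ c := by
    intro u
    have hinj : ∀ z₁ ∈ u, ∀ z₂ ∈ u, x - z₁ = x - z₂ → z₁ = z₂ := by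
      intro z₁ _ z₂ _ h
      have := congrArg (fun w => x - w) h
      simpa using this
    have himage : ∑ w ∈ u.image (fun z => x - z), g (nn w) = ∑ z ∈ u, g (nn (x - z)) :=
      Finset.sum_image hinj
    rw [← himage]
    set v := u.image (fun z => x - z) with hv
    set N := v.sup nn with hN
    have hsub : v ⊆ box d N := by
      intro w hw
      rw [mem_box]
      exact Finset.le_sup hw
    calc ∑ w ∈ v, g (nn w) ≤ ∑ w ∈ box d N, g (nn w) :=
          Finset.sum_le_sum_of_subset_of_nonneg hsub (fun w _ _ => hg _)
      _ ≤ ∑ k ∈ Finset.range (N + 1), c1 d * mx k ^ (d - 1) * g k := sum_box_le hd g hg N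
      _ ≤ c := hb N
  have hsummable : Summable (fun z : Fin d → ℤ => g (nn (x - z))) :=
    summable_of_sum_le (fun z => hg _) key
  exact ⟨hsummable, Summable.tsum_le_of_sum_le hsummable key⟩


open Finset

variable {d : ℕ}

lemma pow_mul_rpow (hd : 0 < d) (k : ℕ) :
    mx k ^ (d - 1) * mx k ^ ((2 : ℝ) - d) = mx k := by
  rw [← Real.rpow_natCast (mx k) (d - 1), ← Real.rpow_add (mx_pos k)]
  have : ((d - 1 : ℕ) : ℝ) + ((2 : ℝ) - d) = 1 := by
    have h1 : (1 : ℕ) ≤ d := hd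
    push_cast [Nat.cast_sub h1]
    ring
  rw [this, Real.rpow_one]

lemma near_sum (hd : 0 < d) (m N : ℕ) :
    ∑ k ∈ Finset.range (N + 1),
      c1 d * mx k ^ (d - 1) * (if 2 * k ≤ m then mx k ^ ((2 : ℝ) - d) else 0)
      ≤ c1 d * (mx m * mx m) := by
  have hterm : ∀ k, c1 d * mx k ^ (d - 1) * (if 2 * k ≤ m then mx k ^ ((2 : ℝ) - d) else 0)
      = (if 2 * k ≤ m then c1 d * mx k else 0) := by
    intro k
    split
    · rw [mul_assoc, pow_mul_rpow hd]
    · rw [mul_zero]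
  simp only [hterm]
  rw [← Finset.sum_filter]
  have hsub : (Finset.range (N + 1)).filter (fun k => 2 * k ≤ m) ⊆
      Finset.range (m / 2 + 1) := by
    intro k hk
    rw [Finset.mem_filter, Finset.mem_range] at hk
    rw [Finset.mem_range]
    omega
  have hnn : ∀ k, 0 ≤ c1 d * mx k := fun k => mul_nonneg (c1_pos hd).le (mx_nonneg k)
  calc ∑ k ∈ (Finset.range (N + 1)).filter (fun k => 2 * k ≤ m), c1 d * mx k
      ≤ ∑ k ∈ Finset.range (m / 2 + 1), c1 d * mx k :=
        Finset.sum_le_sum_of_subset_of_nonneg hsub (fun k _ _ => hnn k)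
    _ ≤ ∑ _k ∈ Finset.range (m / 2 + 1), c1 d * mx m := by
        apply Finset.sum_le_sum
        intro k hk
        rw [Finset.mem_range] at hk
        exact mul_le_mul_of_nonneg_left (mx_le_mx (by omega)) (c1_pos hd).le
    _ = ((m / 2 + 1 : ℕ) : ℝ) * (c1 d * mx m) := by
        rw [Finset.sum_const, Finset.card_range, nsmul_eq_mul]
    _ ≤ mx m * (c1 d * mx m) := by
        apply mul_le_mul_of_nonneg_right _ (hnn m)
        rw [mx_eq_cast]
        exact_mod_cast (by omega : m / 2 + 1 ≤ max m 1)
    _ = c1 d * (mx m * mx m) := by ring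

lemma mx_rpow_neg_two (k : ℕ) (hk : 1 ≤ k) : mx k ^ ((-2 : ℝ)) = (((k : ℝ)) ^ 2)⁻¹ := by
  have : mx k = (k : ℝ) := max_eq_left (by exact_mod_cast hk)
  rw [this, show ((-2 : ℝ)) = -((2 : ℕ) : ℝ) by norm_num, Real.rpow_neg (Nat.cast_nonneg k),
    Real.rpow_natCast]

lemma tail_inv_sq (m N : ℕ) :
    ∑ k ∈ Finset.range (N + 1), (if m ≤ 2 * k then mx k ^ ((-2 : ℝ)) else 0) ≤ 8 / mx m := by
  have hpos : ∀ k : ℕ, 0 ≤ mx k ^ ((-2 : ℝ)) := fun k => Real.rpow_nonneg (mx_nonneg k) _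
  rcases le_or_gt m 1 with hm | hm
  · have hmx : mx m = 1 := by
      interval_cases m <;> simp [mx]
    rw [hmx]
    calc ∑ k ∈ Finset.range (N + 1), (if m ≤ 2 * k then mx k ^ ((-2 : ℝ)) else 0)
        ≤ ∑ k ∈ Finset.range (N + 1), mx k ^ ((-2 : ℝ)) := by
          apply Finset.sum_le_sum
          intro k _
          split
          · exact le_rfl
          · exact hpos k
      _ = mx 0 ^ ((-2 : ℝ)) + ∑ k ∈ Finset.Ioo 0 (N + 1), mx k ^ ((-2 : ℝ)) := by
          have hins : Finset.range (N + 1) = insert 0 (Finset.Ioo 0 (N + 1)) := by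
            ext k
            simp only [Finset.mem_range, Finset.mem_insert, Finset.mem_Ioo]
            omega
          rw [hins, Finset.sum_insert (by simp)]
      _ ≤ 1 + 2 / ((0 : ℕ) + 1) := by
          have h0 : mx 0 ^ ((-2 : ℝ)) = 1 := by
            have : mx 0 = 1 := by simp [mx]
            rw [this, Real.one_rpow]
          rw [h0]
          have heq : ∑ k ∈ Finset.Ioo 0 (N + 1), mx k ^ ((-2 : ℝ))
              = ∑ k ∈ Finset.Ioo 0 (N + 1), (((k : ℝ)) ^ 2)⁻¹ := by
            apply Finset.sum_congr rfl
            intro k hk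
            rw [Finset.mem_Ioo] at hk
            exact mx_rpow_neg_two k hk.1
          rw [heq]
          have := sum_Ioo_inv_sq_le (α := ℝ) 0 (N + 1)
          push_cast at this ⊢
          linarith
      _ ≤ 8 / 1 := by norm_num
  · -- m ≥ 2
    set a := (m + 1) / 2 with ha
    have ha1 : 1 ≤ a := by omega
    have hmx : mx m = (m : ℝ) := max_eq_left (by exact_mod_cast (by omega : 1 ≤ m))
    rw [← Finset.sum_filter]
    have hsub : (Finset.range (N + 1)).filter (fun k => m ≤ 2 * k) ⊆
        Finset.Ioo (a - 1) (N + 1) := by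
      intro k hk
      rw [Finset.mem_filter, Finset.mem_range] at hk
      rw [Finset.mem_Ioo]
      omega
    have heq : ∑ k ∈ (Finset.range (N + 1)).filter (fun k => m ≤ 2 * k), mx k ^ ((-2 : ℝ))
        = ∑ k ∈ (Finset.range (N + 1)).filter (fun k => m ≤ 2 * k), (((k : ℝ)) ^ 2)⁻¹ := by
      apply Finset.sum_congr rfl
      intro k hk
      rw [Finset.mem_filter] at hk
      exact mx_rpow_neg_two k (by omega)
    rw [heq]
    calc ∑ k ∈ (Finset.range (N + 1)).filter (fun k => m ≤ 2 * k), (((k : ℝ)) ^ 2)⁻¹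
        ≤ ∑ k ∈ Finset.Ioo (a - 1) (N + 1), (((k : ℝ)) ^ 2)⁻¹ := by
          apply Finset.sum_le_sum_of_subset_of_nonneg hsub
          intro k _ _
          positivity
      _ ≤ 2 / (((a - 1 : ℕ) : ℝ) + 1) := sum_Ioo_inv_sq_le _ _
      _ = 2 / (a : ℝ) := by
          congr 1
          push_cast [Nat.cast_sub ha1]
          ring
      _ ≤ 8 / mx m := by
          rw [hmx, div_le_div_iff₀ (by positivity) (by positivity : (0:ℝ) < (m:ℝ))]
          have : 2 * m ≤ 8 * a := by omega
          exact_mod_cast this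


open Finset

variable {d : ℕ}

lemma half_le_mx {m k : ℕ} (h : m ≤ 2 * k) : mx m / 2 ≤ mx k := by
  rcases le_or_gt m 1 with hm | hm
  · have hmx : mx m = 1 := by interval_cases m <;> simp [mx]
    rw [hmx]
    linarith [one_le_mx k]
  · have hmx : mx m = (m : ℝ) := max_eq_left (by exact_mod_cast (by omega : 1 ≤ m))
    rw [hmx]
    have hk : (m : ℝ) ≤ 2 * k := by exact_mod_cast h
    have h2 : (k : ℝ) ≤ mx k := le_max_left _ _
    linarith

lemma half_rpow {m k : ℕ} (h : m ≤ 2 * k) {s : ℝ} (hs : s ≤ 0) :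
    mx k ^ s ≤ 2 ^ (-s) * mx m ^ s := by
  have h1 : mx k ^ s ≤ (mx m / 2) ^ s :=
    Real.rpow_le_rpow_of_nonpos (by linarith [mx_pos m]) (half_le_mx h) hs
  have h2 : (mx m / 2) ^ s = 2 ^ (-s) * mx m ^ s := by
    rw [Real.div_rpow (mx_nonneg m) (by norm_num : (0:ℝ) ≤ 2), div_eq_mul_inv,
      ← Real.rpow_neg (by norm_num : (0:ℝ) ≤ 2)]
    ring
  rw [h2] at h1
  exact h1

lemma far_sum (hd7 : 7 ≤ d) (m N : ℕ) :
    ∑ k ∈ Finset.range (N + 1),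
      c1 d * mx k ^ (d - 1) * (if m ≤ 2 * k then mx k ^ ((4 : ℝ) - 2 * d) else 0)
      ≤ c1 d * 2 ^ ((d : ℝ) - 2) * mx m ^ ((4 : ℝ) - d) := by
  have hd : 0 < d := by omega
  have hd7R : (7 : ℝ) ≤ (d : ℝ) := by exact_mod_cast hd7
  set c : ℝ := c1 d * (2 ^ ((d : ℝ) - 5) * mx m ^ ((5 : ℝ) - d)) with hc
  have hcnn : 0 ≤ c := by
    apply mul_nonneg (c1_pos hd).le
    apply mul_nonneg (Real.rpow_nonneg (by norm_num) _) (Real.rpow_nonneg (mx_nonneg m) _)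
  have hterm : ∀ k ∈ Finset.range (N + 1),
      c1 d * mx k ^ (d - 1) * (if m ≤ 2 * k then mx k ^ ((4 : ℝ) - 2 * d) else 0)
      ≤ c * (if m ≤ 2 * k then mx k ^ ((-2 : ℝ)) else 0) := by
    intro k _
    by_cases h : m ≤ 2 * k
    · simp only [if_pos h]
      have e1 : mx k ^ (d - 1) * mx k ^ ((4 : ℝ) - 2 * d)
          = mx k ^ ((5 : ℝ) - d) * mx k ^ ((-2 : ℝ)) := by
        rw [← Real.rpow_natCast (mx k) (d - 1), ← Real.rpow_add (mx_pos k),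
          ← Real.rpow_add (mx_pos k)]
        congr 1
        have h1 : (1 : ℕ) ≤ d := hd
        push_cast [Nat.cast_sub h1]
        ring
      have e2 : mx k ^ ((5 : ℝ) - d) ≤ 2 ^ ((d : ℝ) - 5) * mx m ^ ((5 : ℝ) - d) := by
        have := half_rpow h (show (5 : ℝ) - d ≤ 0 by linarith)
        rw [show -((5 : ℝ) - d) = (d : ℝ) - 5 by ring] at this
        exact this
      calc c1 d * mx k ^ (d - 1) * mx k ^ ((4 : ℝ) - 2 * d)
          = c1 d * (mx k ^ ((5 : ℝ) - d) * mx k ^ ((-2 : ℝ))) := by rw [mul_assoc, e1]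
        _ ≤ c1 d * ((2 ^ ((d : ℝ) - 5) * mx m ^ ((5 : ℝ) - d)) * mx k ^ ((-2 : ℝ))) := by
            apply mul_le_mul_of_nonneg_left _ (c1_pos hd).le
            exact mul_le_mul_of_nonneg_right e2 (Real.rpow_nonneg (mx_nonneg k) _)
        _ = c * mx k ^ ((-2 : ℝ)) := by rw [hc]; ring
    · simp [h]
  calc ∑ k ∈ Finset.range (N + 1),
        c1 d * mx k ^ (d - 1) * (if m ≤ 2 * k then mx k ^ ((4 : ℝ) - 2 * d) else 0)
      ≤ ∑ k ∈ Finset.range (N + 1), c * (if m ≤ 2 * k then mx k ^ ((-2 : ℝ)) else 0) :=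
        Finset.sum_le_sum hterm
    _ = c * ∑ k ∈ Finset.range (N + 1), (if m ≤ 2 * k then mx k ^ ((-2 : ℝ)) else 0) := by
        rw [Finset.mul_sum]
    _ ≤ c * (8 / mx m) := mul_le_mul_of_nonneg_left (tail_inv_sq m N) hcnn
    _ = c1 d * 2 ^ ((d : ℝ) - 2) * mx m ^ ((4 : ℝ) - d) := by
        rw [hc]
        have hm := mx_pos m
        have e3 : mx m ^ ((5 : ℝ) - d) * (8 / mx m) = 8 * mx m ^ ((4 : ℝ) - d) := by
          rw [show (5 : ℝ) - d = ((4 : ℝ) - d) + 1 by ring, Real.rpow_add hm, Real.rpow_one]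
          field_simp
        have e4 : (2 : ℝ) ^ ((d : ℝ) - 5) * 8 = 2 ^ ((d : ℝ) - 2) := by
          rw [show (d : ℝ) - 2 = ((d : ℝ) - 5) + 3 by ring, Real.rpow_add two_pos]
          congr 1
          rw [show (3 : ℝ) = ((3 : ℕ) : ℝ) by norm_num, Real.rpow_natCast]
          norm_num
        calc c1 d * (2 ^ ((d : ℝ) - 5) * mx m ^ ((5 : ℝ) - d)) * (8 / mx m)
            = c1 d * 2 ^ ((d : ℝ) - 5) * (mx m ^ ((5 : ℝ) - d) * (8 / mx m)) := by ring
          _ = c1 d * 2 ^ ((d : ℝ) - 5) * (8 * mx m ^ ((4 : ℝ) - d)) := by rw [e3]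
          _ = c1 d * (2 ^ ((d : ℝ) - 5) * 8) * mx m ^ ((4 : ℝ) - d) := by ring
          _ = c1 d * 2 ^ ((d : ℝ) - 2) * mx m ^ ((4 : ℝ) - d) := by rw [e4]

end ConvAux
open ConvAux

theorem convolution_bound_2d_2d :
    ∀ d : ℕ, 7 ≤ d → ∃ C : ℝ, 0 < C ∧ ∀ x y : Fin d → ℤ,
      Summable (fun z : Fin d → ℤ =>
        max (latNorm (x - z)) 1 ^ ((2 : ℝ) - d) * max (latNorm (z - y)) 1 ^ ((2 : ℝ) - d)) ∧
      (∑' z : Fin d → ℤ,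
        max (latNorm (x - z)) 1 ^ ((2 : ℝ) - d) * max (latNorm (z - y)) 1 ^ ((2 : ℝ) - d))
        ≤ C * max (latNorm (x - y)) 1 ^ ((4 : ℝ) - d) := by
  intro d hd7
  have hd : 0 < d := by omega
  have hdR : (0 : ℝ) < (d : ℝ) := by exact_mod_cast hd
  have hd7R : (7 : ℝ) ≤ (d : ℝ) := by exact_mod_cast hd7
  refine ⟨4 * (c1 d * 2 ^ ((d : ℝ) - 2)) * (d : ℝ) ^ ((d : ℝ) - 4), ?_, ?_⟩
  · have h1 := c1_pos hd
    have h2 : (0 : ℝ) < 2 ^ ((d : ℝ) - 2) := Real.rpow_pos_of_pos two_pos _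
    have h3 : (0 : ℝ) < (d : ℝ) ^ ((d : ℝ) - 4) := Real.rpow_pos_of_pos hdR _
    have : (0 : ℝ) < 4 := by norm_num
    exact mul_pos (mul_pos this (mul_pos h1 h2)) h3
  intro x y
  set m : ℕ := nn (x - y) with hm
  set m₁ : ℝ := mx m with hm₁
  have hm₁pos : 0 < m₁ := mx_pos m
  set B : ℝ := 2 ^ ((d : ℝ) - 2) * m₁ ^ ((2 : ℝ) - d) with hB
  have hBnn : 0 ≤ B := by
    apply mul_nonneg (Real.rpow_nonneg (by norm_num) _) (Real.rpow_nonneg hm₁pos.le _)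
  set g1 : ℕ → ℝ := fun k => if 2 * k ≤ m then mx k ^ ((2 : ℝ) - d) else 0 with hg1def
  set g3 : ℕ → ℝ := fun k => if m ≤ 2 * k then mx k ^ ((4 : ℝ) - 2 * d) else 0 with hg3def
  have hg1 : ∀ k, 0 ≤ g1 k := by
    intro k
    rw [hg1def]
    dsimp only
    split
    · exact Real.rpow_nonneg (mx_nonneg k) _
    · exact le_rfl
  have hg3 : ∀ k, 0 ≤ g3 k := by
    intro k
    rw [hg3def]
    dsimp only
    split
    · exact Real.rpow_nonneg (mx_nonneg k) _
    · exact le_rfl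
  obtain ⟨S1, T1⟩ := master hd x g1 hg1 (fun N => near_sum hd m N)
  obtain ⟨S2, T2⟩ := master hd y g1 hg1 (fun N => near_sum hd m N)
  obtain ⟨S3, T3⟩ := master hd x g3 hg3 (fun N => far_sum hd7 m N)
  obtain ⟨S4, T4⟩ := master hd y g3 hg3 (fun N => far_sum hd7 m N)
  set F : (Fin d → ℤ) → ℝ := fun z =>
    B * g1 (nn (x - z)) + B * g1 (nn (y - z)) + g3 (nn (x - z)) + g3 (nn (y - z)) with hF
  have hFsummable : Summable F :=
    (((S1.mul_left B).add (S2.mul_left B)).add S3).add S4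
  set term : (Fin d → ℤ) → ℝ := fun z =>
    max (latNorm (x - z)) 1 ^ ((2 : ℝ) - d) * max (latNorm (z - y)) 1 ^ ((2 : ℝ) - d)
    with hterm
  have htermnn : ∀ z, 0 ≤ term z := by
    intro z
    apply mul_nonneg <;>
      exact Real.rpow_nonneg (le_trans zero_le_one (le_max_right _ _)) _
  -- pointwise domination
  have hpoint : ∀ z, term z ≤ F z := by
    intro z
    set a : ℕ := nn (x - z) with ha
    have hbswap : nn (y - z) = nn (z - y) := nn_sub_comm y z
    set b : ℕ := nn (z - y) with hb
    have htri : m ≤ a + b := by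
      rw [hm, ha, hb]
      exact nn_triangle x z y
    have hAa : max (latNorm (x - z)) 1 ^ ((2 : ℝ) - d) ≤ mx a ^ ((2 : ℝ) - d) :=
      Real.rpow_le_rpow_of_nonpos (mx_pos a) (mx_nn_le_maxlat hd _) (by linarith)
    have hAb : max (latNorm (z - y)) 1 ^ ((2 : ℝ) - d) ≤ mx b ^ ((2 : ℝ) - d) :=
      Real.rpow_le_rpow_of_nonpos (mx_pos b) (mx_nn_le_maxlat hd _) (by linarith)
    have hprod : term z ≤ mx a ^ ((2 : ℝ) - d) * mx b ^ ((2 : ℝ) - d) := by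
      rw [hterm]
      dsimp only
      apply mul_le_mul hAa hAb
        (Real.rpow_nonneg (le_trans zero_le_one (le_max_right _ _)) _)
        (Real.rpow_nonneg (mx_nonneg a) _)
    have hFz : F z = B * g1 a + B * g1 b + g3 a + g3 b := by
      rw [hF]
      dsimp only
      rw [hbswap]
    rw [hFz]
    have hg1a := hg1 a
    have hg1b := hg1 b
    have hg3a := hg3 a
    have hg3b := hg3 b
    have hAann : 0 ≤ mx a ^ ((2 : ℝ) - d) := Real.rpow_nonneg (mx_nonneg a) _
    have hAbnn : 0 ≤ mx b ^ ((2 : ℝ) - d) := Real.rpow_nonneg (mx_nonneg b) _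
    by_cases h1 : 2 * a ≤ m
    · -- near x
      have hbf : m ≤ 2 * b := by omega
      have hAbB : mx b ^ ((2 : ℝ) - d) ≤ B := by
        have := half_rpow hbf (show (2 : ℝ) - d ≤ 0 by linarith)
        rw [show -((2 : ℝ) - d) = (d : ℝ) - 2 by ring] at this
        exact this
      have : term z ≤ B * g1 a := by
        rw [hg1def]
        dsimp only
        rw [if_pos h1]
        calc term z ≤ mx a ^ ((2 : ℝ) - d) * mx b ^ ((2 : ℝ) - d) := hprod
          _ ≤ mx a ^ ((2 : ℝ) - d) * B := mul_le_mul_of_nonneg_left hAbB hAann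
          _ = B * mx a ^ ((2 : ℝ) - d) := mul_comm _ _
      have hB1 : 0 ≤ B * g1 b := mul_nonneg hBnn hg1b
      linarith
    · by_cases h2 : 2 * b ≤ m
      · -- near y
        have haf : m ≤ 2 * a := by omega
        have hAaB : mx a ^ ((2 : ℝ) - d) ≤ B := by
          have := half_rpow haf (show (2 : ℝ) - d ≤ 0 by linarith)
          rw [show -((2 : ℝ) - d) = (d : ℝ) - 2 by ring] at this
          exact this
        have : term z ≤ B * g1 b := by
          rw [hg1def]
          dsimp only
          rw [if_pos h2]
          calc term z ≤ mx a ^ ((2 : ℝ) - d) * mx b ^ ((2 : ℝ) - d) := hprod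
            _ ≤ B * mx b ^ ((2 : ℝ) - d) := mul_le_mul_of_nonneg_right hAaB hAbnn
        have hB1 : 0 ≤ B * g1 a := mul_nonneg hBnn hg1a
        linarith
      · -- far region
        have haf : m ≤ 2 * a := by omega
        have hbf : m ≤ 2 * b := by omega
        have hsqa : mx a ^ ((2 : ℝ) - d) * mx a ^ ((2 : ℝ) - d) = mx a ^ ((4 : ℝ) - 2 * d) := by
          rw [← Real.rpow_add (mx_pos a)]
          congr 1
          ring
        have hsqb : mx b ^ ((2 : ℝ) - d) * mx b ^ ((2 : ℝ) - d) = mx b ^ ((4 : ℝ) - 2 * d) := by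
          rw [← Real.rpow_add (mx_pos b)]
          congr 1
          ring
        have hg3a' : g3 a = mx a ^ ((4 : ℝ) - 2 * d) := by
          rw [hg3def]
          dsimp only
          rw [if_pos haf]
        have hg3b' : g3 b = mx b ^ ((4 : ℝ) - 2 * d) := by
          rw [hg3def]
          dsimp only
          rw [if_pos hbf]
        have hamgm : mx a ^ ((2 : ℝ) - d) * mx b ^ ((2 : ℝ) - d)
            ≤ g3 a + g3 b := by
          rw [hg3a', hg3b', ← hsqa, ← hsqb]
          nlinarith [sq_nonneg (mx a ^ ((2 : ℝ) - d) - mx b ^ ((2 : ℝ) - d)),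
            mul_nonneg hAann hAbnn]
        have hB1 : 0 ≤ B * g1 a := mul_nonneg hBnn hg1a
        have hB2 : 0 ≤ B * g1 b := mul_nonneg hBnn hg1b
        linarith [le_trans hprod hamgm]
  have hTermSummable : Summable term := Summable.of_nonneg_of_le htermnn hpoint hFsummable
  refine ⟨hTermSummable, ?_⟩
  have hstep1 : (∑' z, term z) ≤ ∑' z, F z := Summable.tsum_le_tsum hpoint hTermSummable hFsummable
  have hFt : (∑' z, F z) = B * (∑' z, g1 (nn (x - z))) + B * (∑' z, g1 (nn (y - z)))
      + (∑' z, g3 (nn (x - z))) + (∑' z, g3 (nn (y - z))) := by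
    rw [hF]
    rw [Summable.tsum_add (((S1.mul_left B).add (S2.mul_left B)).add S3) S4]
    rw [Summable.tsum_add ((S1.mul_left B).add (S2.mul_left B)) S3]
    rw [Summable.tsum_add (S1.mul_left B) (S2.mul_left B)]
    rw [tsum_mul_left, tsum_mul_left]
  set K : ℝ := c1 d * 2 ^ ((d : ℝ) - 2) * m₁ ^ ((4 : ℝ) - d) with hK
  have hnear_alg : B * (c1 d * (m₁ * m₁)) = K := by
    rw [hB, hK]
    have : m₁ ^ ((2 : ℝ) - d) * (m₁ * m₁) = m₁ ^ ((4 : ℝ) - d) := by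
      rw [show (4 : ℝ) - d = ((2 : ℝ) - d) + 1 + 1 by ring, Real.rpow_add hm₁pos,
        Real.rpow_add hm₁pos, Real.rpow_one]
      ring
    calc 2 ^ ((d : ℝ) - 2) * m₁ ^ ((2 : ℝ) - d) * (c1 d * (m₁ * m₁))
        = c1 d * 2 ^ ((d : ℝ) - 2) * (m₁ ^ ((2 : ℝ) - d) * (m₁ * m₁)) := by ring
      _ = c1 d * 2 ^ ((d : ℝ) - 2) * m₁ ^ ((4 : ℝ) - d) := by rw [this]
  have h1 : B * (∑' z, g1 (nn (x - z))) ≤ K := by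
    rw [← hnear_alg]
    exact mul_le_mul_of_nonneg_left T1 hBnn
  have h2 : B * (∑' z, g1 (nn (y - z))) ≤ K := by
    rw [← hnear_alg]
    exact mul_le_mul_of_nonneg_left T2 hBnn
  have hsumF : (∑' z, F z) ≤ 4 * K := by
    rw [hFt]
    linarith [T3, T4]
  -- relate m₁ ^ (4 - d) to max (latNorm (x-y)) 1 ^ (4 - d)
  have hml : max (latNorm (x - y)) 1 ≤ (d : ℝ) * m₁ := maxlat_le hd (x - y)
  have hmlpos : (0 : ℝ) < max (latNorm (x - y)) 1 :=
    lt_of_lt_of_le one_pos (le_max_right _ _)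
  have hrel : m₁ ^ ((4 : ℝ) - d) ≤ (d : ℝ) ^ ((d : ℝ) - 4)
      * max (latNorm (x - y)) 1 ^ ((4 : ℝ) - d) := by
    have hstep : ((d : ℝ) * m₁) ^ ((4 : ℝ) - d) ≤ max (latNorm (x - y)) 1 ^ ((4 : ℝ) - d) :=
      Real.rpow_le_rpow_of_nonpos hmlpos hml (by linarith)
    have hmul : ((d : ℝ) * m₁) ^ ((4 : ℝ) - d)
        = (d : ℝ) ^ ((4 : ℝ) - d) * m₁ ^ ((4 : ℝ) - d) :=
      Real.mul_rpow hdR.le hm₁pos.le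
    have hcancel : (d : ℝ) ^ ((d : ℝ) - 4) * (d : ℝ) ^ ((4 : ℝ) - d) = 1 := by
      rw [← Real.rpow_add hdR]
      norm_num
    calc m₁ ^ ((4 : ℝ) - d)
        = ((d : ℝ) ^ ((d : ℝ) - 4) * (d : ℝ) ^ ((4 : ℝ) - d)) * m₁ ^ ((4 : ℝ) - d) := by
          rw [hcancel, one_mul]
      _ = (d : ℝ) ^ ((d : ℝ) - 4) * (((d : ℝ) * m₁) ^ ((4 : ℝ) - d)) := by
          rw [hmul]; ring
      _ ≤ (d : ℝ) ^ ((d : ℝ) - 4) * max (latNorm (x - y)) 1 ^ ((4 : ℝ) - d) :=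
          mul_le_mul_of_nonneg_left hstep (Real.rpow_nonneg hdR.le _)
  have hKnn : 0 ≤ c1 d * 2 ^ ((d : ℝ) - 2) :=
    mul_nonneg (c1_pos hd).le (Real.rpow_nonneg (by norm_num) _)
  calc (∑' z, term z) ≤ ∑' z, F z := hstep1
    _ ≤ 4 * K := hsumF
    _ = 4 * (c1 d * 2 ^ ((d : ℝ) - 2)) * m₁ ^ ((4 : ℝ) - d) := by rw [hK]; ring
    _ ≤ 4 * (c1 d * 2 ^ ((d : ℝ) - 2))
        * ((d : ℝ) ^ ((d : ℝ) - 4) * max (latNorm (x - y)) 1 ^ ((4 : ℝ) - d)) := by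
        apply mul_le_mul_of_nonneg_left hrel
        positivity
    _ = 4 * (c1 d * 2 ^ ((d : ℝ) - 2)) * (d : ℝ) ^ ((d : ℝ) - 4)
        * max (latNorm (x - y)) 1 ^ ((4 : ℝ) - d) := by ring
end

section
/- For every dimension d ≥ 7 there exists a constant C > 0 such that for all x, y ∈ ℤ^d, the sum over z ∈ ℤ^d of (max(|x−z|,1))^{2−d} · (max(|z−y|,1))^{4−d} is at most C · (max(|x−y|,1))^{6−d}. -/
open scoped BigOperators
open ENNReal

namespace ConvAux

variable {d : ℕ}

/-- ℕ-valued sup-norm, truncated below by 1. -/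
def nu (w : Fin d → ℤ) : ℕ := max (Finset.univ.sup fun i => (w i).natAbs) 1

lemma one_le_nu (w : Fin d → ℤ) : 1 ≤ nu w := le_max_right _ _

lemma nu_ne_zero (w : Fin d → ℤ) : nu w ≠ 0 := by have := one_le_nu w; omega

lemma natAbs_le_nu (w : Fin d → ℤ) (i : Fin d) : (w i).natAbs ≤ nu w := by
  rw [nu]
  have h : (w i).natAbs ≤ Finset.univ.sup fun j => (w j).natAbs :=
    Finset.le_sup (f := fun j => (w j).natAbs) (Finset.mem_univ i)
  exact le_trans h (le_max_left _ _)

lemma nu_triangle (u v : Fin d → ℤ) : nu (u + v) ≤ nu u + nu v := by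
  rw [nu]
  refine max_le (Finset.sup_le fun i _ => ?_) (by have := one_le_nu u; have := one_le_nu v; omega)
  calc ((u + v) i).natAbs = (u i + v i).natAbs := rfl
    _ ≤ (u i).natAbs + (v i).natAbs := Int.natAbs_add_le _ _
    _ ≤ nu u + nu v := add_le_add (natAbs_le_nu u i) (natAbs_le_nu v i)

lemma abs_le_nu (w : Fin d → ℤ) (i : Fin d) : |(w i : ℝ)| ≤ (nu w : ℝ) := by
  have h2 : |w i| ≤ (nu w : ℤ) := by
    rw [Int.abs_eq_natAbs]; exact_mod_cast natAbs_le_nu w i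
  calc |(w i : ℝ)| = ((|w i| : ℤ) : ℝ) := by push_cast; ring
    _ ≤ (nu w : ℝ) := by exact_mod_cast h2

lemma nu_le_max_latNorm (hd : 0 < d) (w : Fin d → ℤ) :
    (nu w : ℝ) ≤ max (latNorm w) 1 := by
  have : Nonempty (Fin d) := Fin.pos_iff_nonempty.mp hd
  obtain ⟨i, -, hi⟩ := Finset.exists_mem_eq_sup Finset.univ Finset.univ_nonempty
    fun i => (w i).natAbs
  have h1 : ((w i).natAbs : ℝ) ≤ latNorm w := by
    rw [Nat.cast_natAbs]
    push_cast
    rw [← Real.sqrt_sq_eq_abs]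
    exact Real.sqrt_le_sqrt
      (Finset.single_le_sum (fun j _ => sq_nonneg ((w j : ℝ))) (Finset.mem_univ i))
  have heq : (nu w : ℝ) = max ((w i).natAbs : ℝ) 1 := by
    rw [nu, hi]; push_cast [Nat.cast_max]; rfl
  rw [heq]
  exact max_le_max h1 le_rfl

lemma max_latNorm_le (hd : 0 < d) (w : Fin d → ℤ) :
    max (latNorm w) 1 ≤ Real.sqrt d * nu w := by
  have hd1 : (1 : ℝ) ≤ Real.sqrt d := Real.one_le_sqrt.2 (by exact_mod_cast hd)
  have hnu1 : (1 : ℝ) ≤ (nu w : ℝ) := by exact_mod_cast one_le_nu w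
  refine max_le ?_ (by nlinarith)
  have hsum : (∑ i, ((w i : ℝ)) ^ 2) ≤ (d : ℝ) * (nu w : ℝ) ^ 2 := by
    have := Finset.sum_le_card_nsmul Finset.univ (fun i => ((w i : ℝ)) ^ 2) ((nu w : ℝ) ^ 2)
      (fun i _ => by
        calc ((w i : ℝ)) ^ 2 = |(w i : ℝ)| ^ 2 := (sq_abs _).symm
          _ ≤ (nu w : ℝ) ^ 2 := pow_le_pow_left₀ (abs_nonneg _) (abs_le_nu w i) 2)
    simpa [nsmul_eq_mul] using this
  calc latNorm w ≤ Real.sqrt ((d : ℝ) * (nu w : ℝ) ^ 2) := Real.sqrt_le_sqrt hsum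
    _ = Real.sqrt d * (nu w : ℝ) := by
        rw [Real.sqrt_mul (by positivity), Real.sqrt_sq (by positivity)]

lemma rpow_le_rpow_of_le {a b : ℝ≥0∞} (hab : a ≤ b) {s : ℝ} (hs : s ≤ 0) :
    b ^ s ≤ a ^ s := by
  rw [← neg_neg s, ENNReal.rpow_neg b, ENNReal.rpow_neg a]
  exact ENNReal.inv_le_inv.mpr (ENNReal.rpow_le_rpow hab (neg_nonneg.mpr hs))

lemma geom_le (r : ℝ≥0∞) (hr : 2 ≤ r) : ∀ n, ∑ k ∈ Finset.range n, r ^ k ≤ r ^ n := by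
  intro n
  induction n with
  | zero => simp
  | succ n ih =>
      rw [Finset.sum_range_succ]
      calc (∑ k ∈ Finset.range n, r ^ k) + r ^ n ≤ r ^ n + r ^ n := by gcongr
        _ = 2 * r ^ n := by ring
        _ ≤ r * r ^ n := by gcongr
        _ = r ^ (n + 1) := by ring

lemma tsum_ite_geom (a : ℝ≥0∞) (ha : a ≠ 0) (m : ℕ) :
    ∑' k : ℕ, (if m ≤ k then a ^ k else 0) = a ^ m * ∑' k : ℕ, a ^ k := by
  rw [← ENNReal.tsum_mul_left]
  refine tsum_eq_tsum_of_ne_zero_bij (fun j => (j : ℕ) + m) ?_ ?_ ?_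
  · intro x y hxy
    exact Subtype.ext (Nat.add_right_cancel hxy)
  · intro k hk
    have hmk : m ≤ k := by
      by_contra hc
      exact hk (if_neg hc)
    have hg : (k - m) ∈ Function.support (fun j : ℕ => a ^ m * a ^ j) :=
      mul_ne_zero (pow_ne_zero _ ha) (pow_ne_zero _ ha)
    exact ⟨⟨k - m, hg⟩, show (k - m) + m = k by omega⟩
  · intro x
    rw [if_pos (Nat.le_add_left m _), pow_add, mul_comm]

/-- Dyadic shell bound: sum of an antitone function of `nu` over the lattice. -/
lemma shell_bound (hd : 0 < d) (h : ℕ → ℝ≥0∞) (hh : ∀ ⦃a b : ℕ⦄, a ≤ b → h b ≤ h a) :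
    ∑' w : Fin d → ℤ, h (nu w) ≤ ∑' k : ℕ, 2 ^ ((k + 3) * d) * h (2 ^ k) := by
  rw [← tsum_fiberwise (fun w : Fin d → ℤ => h (nu w)) (fun w => Nat.log 2 (nu w))]
  refine ENNReal.tsum_le_tsum fun k => ?_
  set S : Set (Fin d → ℤ) := (fun w : Fin d → ℤ => Nat.log 2 (nu w)) ⁻¹' {k} with hS
  have hfiber : ∀ w ∈ S, 2 ^ k ≤ nu w := by
    intro w hw
    have hw' : Nat.log 2 (nu w) = k := hw
    calc 2 ^ k = 2 ^ Nat.log 2 (nu w) := by rw [hw']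
      _ ≤ nu w := Nat.pow_log_le_self 2 (nu_ne_zero w)
  -- box
  set B : Finset (Fin d → ℤ) :=
    Finset.Icc (fun _ => -(2 ^ (k + 1) : ℤ)) (fun _ => (2 ^ (k + 1) : ℤ)) with hB
  have hsub : S ⊆ ↑B := by
    intro w hw
    have hw' : Nat.log 2 (nu w) = k := hw
    have hlt : nu w < 2 ^ (k + 1) := by
      have := Nat.lt_pow_succ_log_self (by norm_num : 1 < 2) (nu w)
      rwa [hw'] at this
    have hcoord : ∀ i, (w i).natAbs ≤ 2 ^ (k + 1) := fun i =>
      le_trans (natAbs_le_nu w i) hlt.le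
    have hc2 : ((2:ℤ) ^ (k + 1)) = ((2 ^ (k + 1) : ℕ) : ℤ) := by push_cast; ring
    rw [Finset.mem_coe, hB, Finset.mem_Icc]
    constructor <;> rw [Pi.le_def] <;> intro i <;> have := hcoord i <;> omega
  have hcard : (B.card : ℝ≥0∞) ≤ 2 ^ ((k + 3) * d) := by
    have : B.card = (2 ^ (k + 2) + 1) ^ d := by
      rw [hB, Pi.card_Icc]
      simp only [Int.card_Icc]
      rw [Finset.prod_const, Finset.card_univ, Fintype.card_fin]
      have h0 : ((2:ℤ) ^ (k + 1) + 1 - -2 ^ (k + 1)) = ((2 ^ (k + 2) + 1 : ℕ) : ℤ) := by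
        push_cast; ring
      rw [h0, Int.toNat_natCast]
    rw [this]
    have h1 : (2:ℕ) ^ (k + 2) + 1 ≤ 2 ^ (k + 3) := by
      have : (2:ℕ) ^ (k+2) ≥ 1 := Nat.one_le_two_pow
      calc (2:ℕ) ^ (k + 2) + 1 ≤ 2 ^ (k+2) + 2 ^ (k+2) := by omega
        _ = 2 ^ (k + 3) := by ring
    calc ((((2 ^ (k + 2) + 1) ^ d : ℕ)) : ℝ≥0∞) ≤ (((2 ^ (k + 3)) ^ d : ℕ) : ℝ≥0∞) := by
          exact_mod_cast Nat.pow_le_pow_left h1 d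
      _ = 2 ^ ((k + 3) * d) := by push_cast [pow_mul]; ring
  calc ∑' w : S, h (nu (w : Fin d → ℤ)) ≤ ∑' _w : S, h (2 ^ k) :=
        ENNReal.tsum_le_tsum fun w => hh (hfiber w w.2)
    _ = ∑' w : Fin d → ℤ, S.indicator (fun _ => h (2 ^ k)) w := tsum_subtype S (fun _ => h (2 ^ k))
    _ ≤ ∑' w : Fin d → ℤ, (↑B : Set (Fin d → ℤ)).indicator (fun _ => h (2 ^ k)) w :=
        ENNReal.tsum_le_tsum fun w =>
          Set.indicator_le_indicator_of_subset hsub (fun _ => zero_le) w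
    _ = ∑ w ∈ B, h (2 ^ k) := by
        rw [tsum_eq_sum (s := B) (fun b hb => Set.indicator_of_notMem (by simpa using hb) _)]
        exact Finset.sum_congr rfl fun w hw => Set.indicator_of_mem (by simpa using hw) _
    _ = (B.card : ℝ≥0∞) * h (2 ^ k) := by rw [Finset.sum_const, nsmul_eq_mul]
    _ ≤ 2 ^ ((k + 3) * d) * h (2 ^ k) := by gcongr

lemma ball_sum (hd : 0 < d) (p : ℕ) (hp : 1 ≤ p) (s : ℝ) (hs : (d : ℝ) + s = p) (hs0 : s ≤ 0)
    (R : ℕ) (hR : 1 ≤ R) :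
    ∑' w : Fin d → ℤ, (if nu w ≤ R then ((nu w : ℝ≥0∞)) ^ s else 0)
      ≤ 2 ^ (3 * d) * (2 ^ p * (R : ℝ≥0∞) ^ p) := by
  have hR0 : R ≠ 0 := by omega
  set h : ℕ → ℝ≥0∞ := fun n => if n ≤ R then ((n : ℝ≥0∞)) ^ s else 0 with hh
  have hanti : ∀ ⦃a b : ℕ⦄, a ≤ b → h b ≤ h a := by
    intro a b hab
    simp only [hh]
    by_cases hbR : b ≤ R
    · rw [if_pos hbR, if_pos (hab.trans hbR)]
      exact rpow_le_rpow_of_le (by exact_mod_cast hab) hs0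
    · rw [if_neg hbR]; exact zero_le
  refine (shell_bound hd h hanti).trans ?_
  set K := Nat.log 2 R with hK
  have hsupp : ∀ k ∉ Finset.range (K + 1), 2 ^ ((k + 3) * d) * h (2 ^ k) = 0 := by
    intro k hk
    have hkK : ¬ k ≤ K := by simpa [Finset.mem_range, Nat.lt_succ_iff] using hk
    have : ¬ 2 ^ k ≤ R := fun hc => hkK ((Nat.le_log_iff_pow_le one_lt_two hR0).mpr hc)
    simp only [hh, if_neg this, mul_zero]
  rw [tsum_eq_sum hsupp]
  have hterm : ∀ k, 2 ^ ((k + 3) * d) * h (2 ^ k) ≤ 2 ^ (3 * d) * (2 ^ p) ^ k := by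
    intro k
    have h1 : h (2 ^ k) ≤ ((2 ^ k : ℕ) : ℝ≥0∞) ^ s := by
      simp only [hh]; split_ifs <;> simp [zero_le]
    have h2 : (2:ℝ≥0∞) ^ ((k + 3) * d) * ((2 ^ k : ℕ) : ℝ≥0∞) ^ s
        = 2 ^ (3 * d + k * p) := by
      rw [show ((2 ^ k : ℕ) : ℝ≥0∞) = (2:ℝ≥0∞) ^ k by push_cast; ring]
      rw [← ENNReal.rpow_natCast 2 k, ← ENNReal.rpow_mul,
        ← ENNReal.rpow_natCast 2 ((k + 3) * d),
        ← ENNReal.rpow_add _ _ two_ne_zero ENNReal.ofNat_ne_top,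
        ← ENNReal.rpow_natCast 2 (3 * d + k * p)]
      congr 1
      push_cast
      linear_combination (k : ℝ) * hs
    calc 2 ^ ((k + 3) * d) * h (2 ^ k) ≤ 2 ^ ((k + 3) * d) * ((2 ^ k : ℕ) : ℝ≥0∞) ^ s := by
          gcongr
      _ = 2 ^ (3 * d + k * p) := h2
      _ = 2 ^ (3 * d) * (2 ^ p) ^ k := by
          rw [pow_add]; congr 1; rw [pow_mul']
  calc ∑ k ∈ Finset.range (K + 1), 2 ^ ((k + 3) * d) * h (2 ^ k)
      ≤ ∑ k ∈ Finset.range (K + 1), 2 ^ (3 * d) * ((2:ℝ≥0∞) ^ p) ^ k :=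
        Finset.sum_le_sum fun k _ => hterm k
    _ = 2 ^ (3 * d) * ∑ k ∈ Finset.range (K + 1), ((2:ℝ≥0∞) ^ p) ^ k := by
        rw [Finset.mul_sum]
    _ ≤ 2 ^ (3 * d) * ((2:ℝ≥0∞) ^ p) ^ (K + 1) := by
        gcongr
        exact geom_le _ (by calc (2:ℝ≥0∞) = 2 ^ 1 := (pow_one 2).symm
          _ ≤ 2 ^ p := pow_le_pow_right₀ one_le_two hp) _
    _ ≤ 2 ^ (3 * d) * (2 ^ p * (R : ℝ≥0∞) ^ p) := by
        rw [pow_succ, mul_comm (((2:ℝ≥0∞) ^ p) ^ K) (2 ^ p), pow_right_comm]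
        gcongr
        calc ((2:ℝ≥0∞)) ^ K = ((2 ^ K : ℕ) : ℝ≥0∞) := by push_cast; ring
          _ ≤ (R : ℝ≥0∞) := by exact_mod_cast Nat.pow_log_le_self 2 hR0

lemma tail_sum (h7 : 7 ≤ d) (R : ℕ) (hR : 1 ≤ R) :
    ∑' w : Fin d → ℤ,
        (2:ℝ≥0∞) ^ (2 * d - 6) * ((max (2 * nu w) R : ℕ) : ℝ≥0∞) ^ ((6:ℝ) - 2 * d)
      ≤ (2 ^ (6 * d) + 2 ^ (6 * d)) * (R : ℝ≥0∞) ^ ((6:ℝ) - d) := by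
  have hd : 0 < d := by omega
  have hR0 : R ≠ 0 := by omega
  have hd7 : (7 : ℝ) ≤ (d : ℝ) := by exact_mod_cast h7
  set s : ℝ := (6:ℝ) - 2 * d with hs
  have hs0 : s ≤ 0 := by rw [hs]; linarith
  have h6d : (6:ℝ) - (d:ℝ) ≤ -1 := by linarith
  rw [ENNReal.tsum_mul_left]
  set h : ℕ → ℝ≥0∞ := fun n => ((max (2 * n) R : ℕ) : ℝ≥0∞) ^ s with hh
  have hanti : ∀ ⦃a b : ℕ⦄, a ≤ b → h b ≤ h a := by
    intro a b hab
    refine rpow_le_rpow_of_le ?_ hs0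
    exact_mod_cast max_le_max (by omega) le_rfl
  set K := Nat.log 2 R with hK
  set a : ℝ≥0∞ := (2:ℝ≥0∞) ^ ((6:ℝ) - d) with ha
  have ha0 : a ≠ 0 := (ENNReal.rpow_pos (by norm_num) ENNReal.ofNat_ne_top).ne'
  have hahalf : a ≤ 2⁻¹ := by
    rw [ha, ← ENNReal.rpow_neg_one 2]
    exact ENNReal.rpow_le_rpow_of_exponent_le one_le_two h6d
  set g1 : ℕ → ℝ≥0∞ := fun k => if k ≤ K then 2 ^ ((k + 3) * d) * (R : ℝ≥0∞) ^ s else 0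
    with hg1
  set g2 : ℕ → ℝ≥0∞ := fun k =>
      if K + 1 ≤ k then (2:ℝ≥0∞) ^ (3 * (d:ℝ) + s) * a ^ k else 0 with hg2
  have hpoint : ∀ k : ℕ, 2 ^ ((k + 3) * d) * h (2 ^ k) ≤ g1 k + g2 k := by
    intro k
    rcases le_or_gt k K with hk | hk
    · refine le_trans ?_ (le_self_add)
      show _ ≤ if k ≤ K then 2 ^ ((k + 3) * d) * (R : ℝ≥0∞) ^ s else 0
      rw [if_pos hk]
      refine mul_le_mul_right ?_ _
      refine rpow_le_rpow_of_le ?_ hs0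
      exact_mod_cast le_max_right (2 * 2 ^ k) R
    · refine le_trans ?_ (le_add_self)
      show _ ≤ if K + 1 ≤ k then (2:ℝ≥0∞) ^ (3 * (d:ℝ) + s) * a ^ k else 0
      rw [if_pos (show K + 1 ≤ k from hk)]
      have hstep : h (2 ^ k) ≤ ((2 ^ (k + 1) : ℕ) : ℝ≥0∞) ^ s := by
        refine rpow_le_rpow_of_le ?_ hs0
        have : 2 ^ (k + 1) ≤ max (2 * 2 ^ k) R := by
          have : (2:ℕ) ^ (k + 1) = 2 * 2 ^ k := by ring
          omega
        exact_mod_cast this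
      refine (mul_le_mul_right hstep _).trans ?_
      have heq : (2:ℝ≥0∞) ^ ((k + 3) * d) * ((2 ^ (k + 1) : ℕ) : ℝ≥0∞) ^ s
          = (2:ℝ≥0∞) ^ (3 * (d:ℝ) + s) * a ^ k := by
        rw [show ((2 ^ (k + 1) : ℕ) : ℝ≥0∞) = (2:ℝ≥0∞) ^ (k + 1) by push_cast; ring]
        rw [ha, ← ENNReal.rpow_natCast ((2:ℝ≥0∞) ^ ((6:ℝ) - d)) k, ← ENNReal.rpow_mul,
          ← ENNReal.rpow_natCast 2 (k + 1), ← ENNReal.rpow_mul,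
          ← ENNReal.rpow_natCast 2 ((k + 3) * d),
          ← ENNReal.rpow_add _ _ two_ne_zero ENNReal.ofNat_ne_top,
          ← ENNReal.rpow_add _ _ two_ne_zero ENNReal.ofNat_ne_top]
        congr 1
        rw [hs]
        push_cast
        ring
      exact le_of_eq heq
  -- bound for the first sum
  have hsum1 : ∑' k, g1 k ≤ 2 ^ (4 * d) * (R : ℝ≥0∞) ^ ((6:ℝ) - d) := by
    have hsupp : ∀ k ∉ Finset.range (K + 1), g1 k = 0 := by
      intro k hk
      have : ¬ k ≤ K := by simpa [Finset.mem_range, Nat.lt_succ_iff] using hk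
      show (if k ≤ K then 2 ^ ((k + 3) * d) * (R : ℝ≥0∞) ^ s else 0) = 0
      rw [if_neg this]
    rw [tsum_eq_sum hsupp]
    have hterm : ∀ k ∈ Finset.range (K + 1), g1 k ≤ 2 ^ (3 * d) * ((2:ℝ≥0∞) ^ d) ^ k * (R : ℝ≥0∞) ^ s := by
      intro k hk
      show (if k ≤ K then 2 ^ ((k + 3) * d) * (R : ℝ≥0∞) ^ s else 0) ≤ _
      rw [if_pos (by simpa [Finset.mem_range, Nat.lt_succ_iff] using hk : k ≤ K)]
      refine mul_le_mul_left (le_of_eq ?_) _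
      rw [← pow_mul, ← pow_add]
      congr 1
      ring
    calc ∑ k ∈ Finset.range (K + 1), g1 k
        ≤ ∑ k ∈ Finset.range (K + 1), 2 ^ (3 * d) * ((2:ℝ≥0∞) ^ d) ^ k * (R : ℝ≥0∞) ^ s :=
          Finset.sum_le_sum hterm
      _ = 2 ^ (3 * d) * (∑ k ∈ Finset.range (K + 1), ((2:ℝ≥0∞) ^ d) ^ k) * (R : ℝ≥0∞) ^ s := by
          rw [← Finset.sum_mul, ← Finset.mul_sum]
      _ ≤ 2 ^ (3 * d) * ((2:ℝ≥0∞) ^ d) ^ (K + 1) * (R : ℝ≥0∞) ^ s := by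
          gcongr
          refine geom_le _ ?_ _
          calc (2:ℝ≥0∞) = 2 ^ 1 := (pow_one 2).symm
            _ ≤ 2 ^ d := pow_le_pow_right₀ one_le_two hd
      _ ≤ 2 ^ (3 * d) * (2 ^ d * (R : ℝ≥0∞) ^ d) * (R : ℝ≥0∞) ^ s := by
          gcongr
          rw [pow_right_comm, ← mul_pow]
          refine pow_le_pow_left₀ zero_le ?_ d
          calc (2:ℝ≥0∞) ^ (K + 1) = ((2 ^ (K + 1) : ℕ) : ℝ≥0∞) := by push_cast; ring
            _ ≤ ((2 * R : ℕ) : ℝ≥0∞) := by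
                have h2k : (2:ℕ) ^ (K + 1) ≤ 2 * R := by
                  rw [pow_succ, mul_comm]
                  exact Nat.mul_le_mul_left 2 (Nat.pow_log_le_self 2 hR0)
                exact_mod_cast h2k
            _ = 2 * (R : ℝ≥0∞) := by push_cast; ring
      _ = 2 ^ (4 * d) * ((R : ℝ≥0∞) ^ d * (R : ℝ≥0∞) ^ s) := by
          rw [show (4:ℕ) * d = 3 * d + d by ring, pow_add]
          ring
      _ = 2 ^ (4 * d) * (R : ℝ≥0∞) ^ ((6:ℝ) - d) := by
          congr 1
          rw [← ENNReal.rpow_natCast (R : ℝ≥0∞) d,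
            ← ENNReal.rpow_add _ _ (by exact_mod_cast hR0) (ENNReal.natCast_ne_top R)]
          congr 1
          rw [hs]; ring
  -- bound for the second sum
  have hsum2 : ∑' k, g2 k ≤ 2 ^ (3 * d) * 2 * (R : ℝ≥0∞) ^ ((6:ℝ) - d) := by
    have : ∑' k, g2 k = (2:ℝ≥0∞) ^ (3 * (d:ℝ) + s) * (a ^ (K + 1) * ∑' k : ℕ, a ^ k) := by
      rw [← tsum_ite_geom a ha0 (K + 1), ← ENNReal.tsum_mul_left]
      congr 1 with k
      show (if K + 1 ≤ k then (2:ℝ≥0∞) ^ (3 * (d:ℝ) + s) * a ^ k else 0) = _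
      rw [mul_ite, mul_zero]
    rw [this]
    have h1 : (2:ℝ≥0∞) ^ (3 * (d:ℝ) + s) ≤ 2 ^ (3 * d) := by
      rw [← ENNReal.rpow_natCast 2 (3 * d)]
      refine ENNReal.rpow_le_rpow_of_exponent_le one_le_two ?_
      push_cast
      linarith
    have h2 : a ^ (K + 1) ≤ (R : ℝ≥0∞) ^ ((6:ℝ) - d) := by
      have : a ^ (K + 1) = ((2 ^ (K + 1) : ℕ) : ℝ≥0∞) ^ ((6:ℝ) - d) := by
        rw [ha, show ((2 ^ (K + 1) : ℕ) : ℝ≥0∞) = (2:ℝ≥0∞) ^ (K + 1) by push_cast; ring,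
          ← ENNReal.rpow_natCast 2 (K + 1), ← ENNReal.rpow_mul, ← ENNReal.rpow_natCast a (K + 1),
          ha, ← ENNReal.rpow_mul]
        congr 1
        ring
      rw [this]
      refine rpow_le_rpow_of_le ?_ (by linarith)
      exact_mod_cast (Nat.lt_pow_succ_log_self one_lt_two R).le
    have h3 : ∑' k : ℕ, a ^ k ≤ 2 := by
      rw [ENNReal.tsum_geometric]
      calc (1 - a)⁻¹ ≤ (1 - 2⁻¹)⁻¹ :=
            ENNReal.inv_le_inv.mpr (tsub_le_tsub_left hahalf 1)
        _ = 2 := by rw [ENNReal.one_sub_inv_two, inv_inv]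
    calc (2:ℝ≥0∞) ^ (3 * (d:ℝ) + s) * (a ^ (K + 1) * ∑' k : ℕ, a ^ k)
        ≤ 2 ^ (3 * d) * ((R : ℝ≥0∞) ^ ((6:ℝ) - d) * 2) := by
          exact mul_le_mul' h1 (mul_le_mul' h2 h3)
      _ = 2 ^ (3 * d) * 2 * (R : ℝ≥0∞) ^ ((6:ℝ) - d) := by ring
  calc (2:ℝ≥0∞) ^ (2 * d - 6) * ∑' w : Fin d → ℤ, ((max (2 * nu w) R : ℕ) : ℝ≥0∞) ^ s
      ≤ 2 ^ (2 * d - 6) * (∑' k, g1 k + ∑' k, g2 k) := by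
        gcongr
        exact (shell_bound hd h hanti).trans
          ((ENNReal.tsum_le_tsum hpoint).trans (le_of_eq ENNReal.tsum_add))
    _ ≤ 2 ^ (2 * d - 6) *
          (2 ^ (4 * d) * (R : ℝ≥0∞) ^ ((6:ℝ) - d) + 2 ^ (3 * d) * 2 * (R : ℝ≥0∞) ^ ((6:ℝ) - d)) := by
        gcongr
    _ = (2 ^ (2 * d - 6 + 4 * d) + 2 ^ (2 * d - 6 + (3 * d + 1))) * (R : ℝ≥0∞) ^ ((6:ℝ) - d) := by
        rw [pow_add, pow_add, pow_succ]
        ring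
    _ ≤ (2 ^ (6 * d) + 2 ^ (6 * d)) * (R : ℝ≥0∞) ^ ((6:ℝ) - d) := by
        gcongr <;> first
          | exact one_le_two
          | omega

lemma half_bound (n R : ℕ) (h : R ≤ 2 * n) (t : ℝ) (ht : t ≤ 0) (htd : -t ≤ (d : ℝ)) :
    (n : ℝ≥0∞) ^ t ≤ 2 ^ d * (R : ℝ≥0∞) ^ t := by
  have h2n : ((2 * n : ℕ) : ℝ≥0∞) ^ t ≤ (R : ℝ≥0∞) ^ t :=
    rpow_le_rpow_of_le (by exact_mod_cast h) ht
  have hsplit : ((2 * n : ℕ) : ℝ≥0∞) ^ t = 2 ^ t * (n : ℝ≥0∞) ^ t := by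
    rw [show ((2 * n : ℕ) : ℝ≥0∞) = 2 * (n : ℝ≥0∞) by push_cast; ring]
    exact ENNReal.mul_rpow_of_ne_top ENNReal.ofNat_ne_top (ENNReal.natCast_ne_top n) t
  have hkey : (n : ℝ≥0∞) ^ t = 2 ^ (-t) * (2 ^ t * (n : ℝ≥0∞) ^ t) := by
    rw [← mul_assoc, ← ENNReal.rpow_add _ _ two_ne_zero ENNReal.ofNat_ne_top,
      neg_add_cancel, ENNReal.rpow_zero, one_mul]
  rw [hkey, ← hsplit]
  calc (2:ℝ≥0∞) ^ (-t) * ((2 * n : ℕ) : ℝ≥0∞) ^ t ≤ 2 ^ ((d:ℝ)) * (R : ℝ≥0∞) ^ t :=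
        mul_le_mul' (ENNReal.rpow_le_rpow_of_exponent_le one_le_two htd) h2n
    _ = 2 ^ d * (R : ℝ≥0∞) ^ t := by rw [ENNReal.rpow_natCast]

lemma tail_term_eq (h7 : 7 ≤ d) (n R : ℕ) (hn : R ≤ 2 * n) :
    (2:ℝ≥0∞) ^ (2 * d - 6) * ((max (2 * n) R : ℕ) : ℝ≥0∞) ^ ((6:ℝ) - 2 * d)
      = (n : ℝ≥0∞) ^ ((6:ℝ) - 2 * d) := by
  rw [max_eq_left hn]
  rw [show ((2 * n : ℕ) : ℝ≥0∞) = 2 * (n : ℝ≥0∞) by push_cast; ring]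
  rw [ENNReal.mul_rpow_of_ne_top ENNReal.ofNat_ne_top (ENNReal.natCast_ne_top n)]
  rw [← mul_assoc, ← ENNReal.rpow_natCast 2 (2 * d - 6),
    ← ENNReal.rpow_add _ _ two_ne_zero ENNReal.ofNat_ne_top]
  have h6 : (6:ℕ) ≤ 2 * d := by omega
  have he : ((2 * d - 6 : ℕ) : ℝ) + ((6:ℝ) - 2 * d) = 0 := by
    rw [Nat.cast_sub h6]
    push_cast
    ring
  rw [he, ENNReal.rpow_zero, one_mul]

lemma main_ennreal (h7 : 7 ≤ d) :
    ∃ C : ℝ≥0∞, C ≠ ⊤ ∧ ∀ x y : Fin d → ℤ,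
      (∑' z : Fin d → ℤ,
          (nu (x - z) : ℝ≥0∞) ^ ((2:ℝ) - d) * (nu (z - y) : ℝ≥0∞) ^ ((4:ℝ) - d))
        ≤ C * (nu (x - y) : ℝ≥0∞) ^ ((6:ℝ) - d) := by
  have hd : 0 < d := by omega
  have hd7 : (7:ℝ) ≤ (d:ℝ) := by exact_mod_cast h7
  refine ⟨2 ^ d * 2 ^ (3 * d) * 2 ^ 4 + (2 ^ d * 2 ^ (3 * d) * 2 ^ 2 +
      ((2 ^ (6 * d) + 2 ^ (6 * d)) + (2 ^ (6 * d) + 2 ^ (6 * d)))), ?_, ?_⟩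
  · have hp : ∀ n : ℕ, (2:ℝ≥0∞) ^ n ≠ ⊤ := fun n => ENNReal.pow_ne_top ENNReal.ofNat_ne_top
    exact ENNReal.add_ne_top.mpr ⟨ENNReal.mul_ne_top (ENNReal.mul_ne_top (hp _) (hp _)) (hp _),
      ENNReal.add_ne_top.mpr ⟨ENNReal.mul_ne_top (ENNReal.mul_ne_top (hp _) (hp _)) (hp _),
        ENNReal.add_ne_top.mpr ⟨ENNReal.add_ne_top.mpr ⟨hp _, hp _⟩,
          ENNReal.add_ne_top.mpr ⟨hp _, hp _⟩⟩⟩⟩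
  intro x y
  set R : ℕ := nu (x - y) with hRdef
  have hR1 : 1 ≤ R := one_le_nu _
  have hRne : (R : ℝ≥0∞) ≠ 0 := Nat.cast_ne_zero.mpr (by omega)
  have hRtop : (R : ℝ≥0∞) ≠ ⊤ := ENNReal.natCast_ne_top R
  set cA : ℝ≥0∞ := 2 ^ d * (R : ℝ≥0∞) ^ ((2:ℝ) - d) with hcA
  set cB : ℝ≥0∞ := 2 ^ d * (R : ℝ≥0∞) ^ ((4:ℝ) - d) with hcB
  set A : (Fin d → ℤ) → ℝ≥0∞ := fun z =>
    cA * (if nu (z - y) ≤ R then (nu (z - y) : ℝ≥0∞) ^ ((4:ℝ) - d) else 0) with hA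
  set B : (Fin d → ℤ) → ℝ≥0∞ := fun z =>
    cB * (if nu (x - z) ≤ R then (nu (x - z) : ℝ≥0∞) ^ ((2:ℝ) - d) else 0) with hB
  set E1 : (Fin d → ℤ) → ℝ≥0∞ := fun z =>
    (2:ℝ≥0∞) ^ (2 * d - 6) * ((max (2 * nu (x - z)) R : ℕ) : ℝ≥0∞) ^ ((6:ℝ) - 2 * d) with hE1
  set E2 : (Fin d → ℤ) → ℝ≥0∞ := fun z =>
    (2:ℝ≥0∞) ^ (2 * d - 6) * ((max (2 * nu (z - y)) R : ℕ) : ℝ≥0∞) ^ ((6:ℝ) - 2 * d) with hE2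
  have hpoint : ∀ z : Fin d → ℤ,
      (nu (x - z) : ℝ≥0∞) ^ ((2:ℝ) - d) * (nu (z - y) : ℝ≥0∞) ^ ((4:ℝ) - d)
        ≤ A z + (B z + (E1 z + E2 z)) := by
    intro z
    have htri : R ≤ nu (x - z) + nu (z - y) := by
      have h := nu_triangle (x - z) (z - y)
      rwa [sub_add_sub_cancel] at h
    have hn1 : 1 ≤ nu (x - z) := one_le_nu _
    have hn2 : 1 ≤ nu (z - y) := one_le_nu _
    rcases le_or_gt (2 * nu (z - y)) R with hc1 | hc1
    · -- z is close to y : use A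
      refine le_trans ?_ le_self_add
      have hb : (nu (x - z) : ℝ≥0∞) ^ ((2:ℝ) - d) ≤ 2 ^ d * (R : ℝ≥0∞) ^ ((2:ℝ) - d) :=
        half_bound (nu (x - z)) R (by omega) _ (by linarith) (by linarith)
      show _ ≤ cA * (if nu (z - y) ≤ R then (nu (z - y) : ℝ≥0∞) ^ ((4:ℝ) - d) else 0)
      rw [if_pos (by omega : nu (z - y) ≤ R), hcA]
      exact mul_le_mul_left hb _
    rcases le_or_gt (2 * nu (x - z)) R with hc2 | hc2
    · -- z is close to x : use B
      refine le_trans ?_ (le_trans le_self_add le_add_self)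
      have hb : (nu (z - y) : ℝ≥0∞) ^ ((4:ℝ) - d) ≤ 2 ^ d * (R : ℝ≥0∞) ^ ((4:ℝ) - d) :=
        half_bound (nu (z - y)) R (by omega) _ (by linarith) (by linarith)
      show _ ≤ cB * (if nu (x - z) ≤ R then (nu (x - z) : ℝ≥0∞) ^ ((2:ℝ) - d) else 0)
      rw [if_pos (by omega : nu (x - z) ≤ R), hcB]
      calc (nu (x - z) : ℝ≥0∞) ^ ((2:ℝ) - d) * (nu (z - y) : ℝ≥0∞) ^ ((4:ℝ) - d)
          ≤ (nu (x - z) : ℝ≥0∞) ^ ((2:ℝ) - d) * (2 ^ d * (R : ℝ≥0∞) ^ ((4:ℝ) - d)) :=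
            mul_le_mul_right hb _
        _ = 2 ^ d * (R : ℝ≥0∞) ^ ((4:ℝ) - d) * (nu (x - z) : ℝ≥0∞) ^ ((2:ℝ) - d) := by
            ring
    · -- both far : use E1 or E2
      rcases le_total (nu (x - z)) (nu (z - y)) with hcmp | hcmp
      · refine le_trans ?_ (le_trans le_self_add (le_trans le_add_self le_add_self))
        show _ ≤ (2:ℝ≥0∞) ^ (2 * d - 6) *
            ((max (2 * nu (x - z)) R : ℕ) : ℝ≥0∞) ^ ((6:ℝ) - 2 * d)
        rw [tail_term_eq h7 (nu (x - z)) R hc2.le]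
        calc (nu (x - z) : ℝ≥0∞) ^ ((2:ℝ) - d) * (nu (z - y) : ℝ≥0∞) ^ ((4:ℝ) - d)
            ≤ (nu (x - z) : ℝ≥0∞) ^ ((2:ℝ) - d) * (nu (x - z) : ℝ≥0∞) ^ ((4:ℝ) - d) :=
              mul_le_mul_right (rpow_le_rpow_of_le (by exact_mod_cast hcmp) (by linarith)) _
          _ = (nu (x - z) : ℝ≥0∞) ^ (((2:ℝ) - d) + ((4:ℝ) - d)) :=
              (ENNReal.rpow_add _ _ (Nat.cast_ne_zero.mpr (nu_ne_zero _))
                (ENNReal.natCast_ne_top _)).symm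
          _ = (nu (x - z) : ℝ≥0∞) ^ ((6:ℝ) - 2 * d) := by congr 1; ring
      · refine le_trans ?_ (le_trans le_add_self (le_trans le_add_self le_add_self))
        show _ ≤ (2:ℝ≥0∞) ^ (2 * d - 6) *
            ((max (2 * nu (z - y)) R : ℕ) : ℝ≥0∞) ^ ((6:ℝ) - 2 * d)
        rw [tail_term_eq h7 (nu (z - y)) R hc1.le]
        calc (nu (x - z) : ℝ≥0∞) ^ ((2:ℝ) - d) * (nu (z - y) : ℝ≥0∞) ^ ((4:ℝ) - d)
            ≤ (nu (z - y) : ℝ≥0∞) ^ ((2:ℝ) - d) * (nu (z - y) : ℝ≥0∞) ^ ((4:ℝ) - d) :=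
              mul_le_mul_left (rpow_le_rpow_of_le (by exact_mod_cast hcmp) (by linarith)) _
          _ = (nu (z - y) : ℝ≥0∞) ^ (((2:ℝ) - d) + ((4:ℝ) - d)) :=
              (ENNReal.rpow_add _ _ (Nat.cast_ne_zero.mpr (nu_ne_zero _))
                (ENNReal.natCast_ne_top _)).symm
          _ = (nu (z - y) : ℝ≥0∞) ^ ((6:ℝ) - 2 * d) := by congr 1; ring
  have hsub1 : ∀ f : (Fin d → ℤ) → ℝ≥0∞, ∑' z : Fin d → ℤ, f (z - y) = ∑' w, f w := fun f => by
    simpa using (Equiv.subRight y).tsum_eq f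
  have hsub2 : ∀ f : (Fin d → ℤ) → ℝ≥0∞, ∑' z : Fin d → ℤ, f (x - z) = ∑' w, f w := fun f => by
    simpa using (Equiv.subLeft x).tsum_eq f
  have hmerge : ∀ t : ℝ, ∀ p : ℕ, t + p = (6:ℝ) - d →
      (R : ℝ≥0∞) ^ t * (R : ℝ≥0∞) ^ p = (R : ℝ≥0∞) ^ ((6:ℝ) - d) := by
    intro t p hp
    rw [← ENNReal.rpow_natCast (R : ℝ≥0∞) p, ← ENNReal.rpow_add _ _ hRne hRtop, hp]
  have hAs : ∑' z, A z ≤ 2 ^ d * 2 ^ (3 * d) * 2 ^ 4 * (R : ℝ≥0∞) ^ ((6:ℝ) - d) := by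
    have h1 : ∑' z, A z = cA * ∑' w : Fin d → ℤ,
        (if nu w ≤ R then (nu w : ℝ≥0∞) ^ ((4:ℝ) - d) else 0) := by
      simp only [hA]
      rw [ENNReal.tsum_mul_left]
      congr 1
      exact hsub1 (fun w => if nu w ≤ R then (nu w : ℝ≥0∞) ^ ((4:ℝ) - d) else 0)
    have hball := ball_sum hd 4 (by norm_num) ((4:ℝ) - d) (by push_cast; ring) (by linarith) R hR1
    calc ∑' z, A z = cA * ∑' w : Fin d → ℤ,
          (if nu w ≤ R then (nu w : ℝ≥0∞) ^ ((4:ℝ) - d) else 0) := h1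
      _ ≤ cA * (2 ^ (3 * d) * (2 ^ 4 * (R : ℝ≥0∞) ^ 4)) := mul_le_mul_right hball _
      _ = 2 ^ d * 2 ^ (3 * d) * 2 ^ 4 * ((R : ℝ≥0∞) ^ ((2:ℝ) - d) * (R : ℝ≥0∞) ^ (4:ℕ)) := by
          rw [hcA]; ring
      _ = 2 ^ d * 2 ^ (3 * d) * 2 ^ 4 * (R : ℝ≥0∞) ^ ((6:ℝ) - d) := by
          rw [hmerge ((2:ℝ) - d) 4 (by push_cast; ring)]
  have hBs : ∑' z, B z ≤ 2 ^ d * 2 ^ (3 * d) * 2 ^ 2 * (R : ℝ≥0∞) ^ ((6:ℝ) - d) := by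
    have h1 : ∑' z, B z = cB * ∑' w : Fin d → ℤ,
        (if nu w ≤ R then (nu w : ℝ≥0∞) ^ ((2:ℝ) - d) else 0) := by
      simp only [hB]
      rw [ENNReal.tsum_mul_left]
      congr 1
      exact hsub2 (fun w => if nu w ≤ R then (nu w : ℝ≥0∞) ^ ((2:ℝ) - d) else 0)
    have hball := ball_sum hd 2 (by norm_num) ((2:ℝ) - d) (by push_cast; ring) (by linarith) R hR1
    calc ∑' z, B z = cB * ∑' w : Fin d → ℤ,
          (if nu w ≤ R then (nu w : ℝ≥0∞) ^ ((2:ℝ) - d) else 0) := h1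
      _ ≤ cB * (2 ^ (3 * d) * (2 ^ 2 * (R : ℝ≥0∞) ^ 2)) := mul_le_mul_right hball _
      _ = 2 ^ d * 2 ^ (3 * d) * 2 ^ 2 * ((R : ℝ≥0∞) ^ ((4:ℝ) - d) * (R : ℝ≥0∞) ^ (2:ℕ)) := by
          rw [hcB]; ring
      _ = 2 ^ d * 2 ^ (3 * d) * 2 ^ 2 * (R : ℝ≥0∞) ^ ((6:ℝ) - d) := by
          rw [hmerge ((4:ℝ) - d) 2 (by push_cast; ring)]
  have hE1s : ∑' z, E1 z ≤ (2 ^ (6 * d) + 2 ^ (6 * d)) * (R : ℝ≥0∞) ^ ((6:ℝ) - d) := by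
    have h1 : ∑' z, E1 z = ∑' w : Fin d → ℤ,
        (2:ℝ≥0∞) ^ (2 * d - 6) * ((max (2 * nu w) R : ℕ) : ℝ≥0∞) ^ ((6:ℝ) - 2 * d) := by
      simp only [hE1]
      exact hsub2 (fun w =>
        (2:ℝ≥0∞) ^ (2 * d - 6) * ((max (2 * nu w) R : ℕ) : ℝ≥0∞) ^ ((6:ℝ) - 2 * d))
    rw [h1]
    exact tail_sum h7 R hR1
  have hE2s : ∑' z, E2 z ≤ (2 ^ (6 * d) + 2 ^ (6 * d)) * (R : ℝ≥0∞) ^ ((6:ℝ) - d) := by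
    have h1 : ∑' z, E2 z = ∑' w : Fin d → ℤ,
        (2:ℝ≥0∞) ^ (2 * d - 6) * ((max (2 * nu w) R : ℕ) : ℝ≥0∞) ^ ((6:ℝ) - 2 * d) := by
      simp only [hE2]
      exact hsub1 (fun w =>
        (2:ℝ≥0∞) ^ (2 * d - 6) * ((max (2 * nu w) R : ℕ) : ℝ≥0∞) ^ ((6:ℝ) - 2 * d))
    rw [h1]
    exact tail_sum h7 R hR1
  calc ∑' z : Fin d → ℤ,
        (nu (x - z) : ℝ≥0∞) ^ ((2:ℝ) - d) * (nu (z - y) : ℝ≥0∞) ^ ((4:ℝ) - d)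
      ≤ ∑' z, (A z + (B z + (E1 z + E2 z))) := ENNReal.tsum_le_tsum hpoint
    _ = ∑' z, A z + (∑' z, B z + (∑' z, E1 z + ∑' z, E2 z)) := by
        rw [ENNReal.tsum_add, ENNReal.tsum_add, ENNReal.tsum_add]
    _ ≤ 2 ^ d * 2 ^ (3 * d) * 2 ^ 4 * (R : ℝ≥0∞) ^ ((6:ℝ) - d) +
          (2 ^ d * 2 ^ (3 * d) * 2 ^ 2 * (R : ℝ≥0∞) ^ ((6:ℝ) - d) +
            ((2 ^ (6 * d) + 2 ^ (6 * d)) * (R : ℝ≥0∞) ^ ((6:ℝ) - d) +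
              (2 ^ (6 * d) + 2 ^ (6 * d)) * (R : ℝ≥0∞) ^ ((6:ℝ) - d))) :=
        add_le_add hAs (add_le_add hBs (add_le_add hE1s hE2s))
    _ = (2 ^ d * 2 ^ (3 * d) * 2 ^ 4 + (2 ^ d * 2 ^ (3 * d) * 2 ^ 2 +
          ((2 ^ (6 * d) + 2 ^ (6 * d)) + (2 ^ (6 * d) + 2 ^ (6 * d))))) *
            (R : ℝ≥0∞) ^ ((6:ℝ) - d) := by ring

end ConvAux

open ConvAux

theorem convolution_bound_2d_4d :
    ∀ d : ℕ, 7 ≤ d → ∃ C : ℝ, 0 < C ∧ ∀ x y : Fin d → ℤ,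
      Summable (fun z : Fin d → ℤ =>
        max (latNorm (x - z)) 1 ^ ((2 : ℝ) - d) * max (latNorm (z - y)) 1 ^ ((4 : ℝ) - d)) ∧
      (∑' z : Fin d → ℤ,
        max (latNorm (x - z)) 1 ^ ((2 : ℝ) - d) * max (latNorm (z - y)) 1 ^ ((4 : ℝ) - d))
        ≤ C * max (latNorm (x - y)) 1 ^ ((6 : ℝ) - d) := by
  intro d h7
  have hd : 0 < d := by omega
  have hd7 : (7:ℝ) ≤ (d:ℝ) := by exact_mod_cast h7
  obtain ⟨Ce, hCetop, hCe⟩ := main_ennreal h7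
  have hsq1 : (1:ℝ) ≤ Real.sqrt d := Real.one_le_sqrt.2 (by exact_mod_cast hd)
  set Cr : ℝ := (Ce.toReal + 1) * Real.sqrt d ^ ((d:ℝ) - 6) with hCr
  have hCrpos : 0 < Cr := by
    apply _root_.mul_pos
    · have := ENNReal.toReal_nonneg (a := Ce); linarith
    · exact Real.rpow_pos_of_pos (by linarith) _
  refine ⟨Cr, hCrpos, fun x y => ?_⟩
  set T : (Fin d → ℤ) → ℝ := fun z =>
    max (latNorm (x - z)) 1 ^ ((2:ℝ) - d) * max (latNorm (z - y)) 1 ^ ((4:ℝ) - d) with hT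
  have hM1 : ∀ w : Fin d → ℤ, (0:ℝ) < max (latNorm w) 1 := fun w =>
    lt_of_lt_of_le one_pos (le_max_right _ _)
  have hTpos : ∀ z, 0 ≤ T z := fun z =>
    mul_nonneg (Real.rpow_nonneg (hM1 _).le _) (Real.rpow_nonneg (hM1 _).le _)
  have hfac : ∀ (w : Fin d → ℤ) (t : ℝ), t ≤ 0 →
      ENNReal.ofReal (max (latNorm w) 1 ^ t) ≤ (nu w : ℝ≥0∞) ^ t := by
    intro w t ht
    have hnupos : (0:ℝ) < (nu w : ℝ) := by
      have := one_le_nu w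
      exact_mod_cast Nat.pos_of_ne_zero (nu_ne_zero w)
    have h1 : max (latNorm w) 1 ^ t ≤ (nu w : ℝ) ^ t :=
      Real.rpow_le_rpow_of_nonpos hnupos (nu_le_max_latNorm hd w) ht
    calc ENNReal.ofReal (max (latNorm w) 1 ^ t)
        ≤ ENNReal.ofReal ((nu w : ℝ) ^ t) := ENNReal.ofReal_le_ofReal h1
      _ = ENNReal.ofReal ((nu w : ℝ)) ^ t := (ENNReal.ofReal_rpow_of_pos hnupos).symm
      _ = (nu w : ℝ≥0∞) ^ t := by rw [ENNReal.ofReal_natCast]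
  have hofT : ∀ z, ENNReal.ofReal (T z) ≤
      (nu (x - z) : ℝ≥0∞) ^ ((2:ℝ) - d) * (nu (z - y) : ℝ≥0∞) ^ ((4:ℝ) - d) := by
    intro z
    rw [hT]
    show ENNReal.ofReal
        (max (latNorm (x - z)) 1 ^ ((2:ℝ) - d) * max (latNorm (z - y)) 1 ^ ((4:ℝ) - d)) ≤ _
    rw [ENNReal.ofReal_mul (Real.rpow_nonneg (hM1 _).le _)]
    exact mul_le_mul' (hfac _ _ (by linarith)) (hfac _ _ (by linarith))
  have hsum_ofReal : ∑' z, ENNReal.ofReal (T z) ≤ Ce * (nu (x - y) : ℝ≥0∞) ^ ((6:ℝ) - d) :=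
    (ENNReal.tsum_le_tsum hofT).trans (hCe x y)
  have hrpow1 : (nu (x - y) : ℝ≥0∞) ^ ((6:ℝ) - d) ≤ 1 := by
    have h1 : (1:ℝ≥0∞) ≤ (nu (x - y) : ℝ≥0∞) := by
      exact_mod_cast Nat.one_le_cast.mpr (one_le_nu _)
    calc (nu (x - y) : ℝ≥0∞) ^ ((6:ℝ) - d)
        ≤ (nu (x - y) : ℝ≥0∞) ^ (0:ℝ) :=
          ENNReal.rpow_le_rpow_of_exponent_le h1 (by linarith)
      _ = 1 := ENNReal.rpow_zero
  have hfin : Ce * (nu (x - y) : ℝ≥0∞) ^ ((6:ℝ) - d) ≠ ⊤ :=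
    ENNReal.mul_ne_top hCetop (ne_top_of_le_ne_top ENNReal.one_ne_top hrpow1)
  have hS : ∑' z, ENNReal.ofReal (T z) ≠ ⊤ := ne_top_of_le_ne_top hfin hsum_ofReal
  have hsummable : Summable T := by
    have h2 : Summable (fun z => (T z).toNNReal) :=
      ENNReal.tsum_coe_ne_top_iff_summable.mp (by exact hS)
    exact (NNReal.summable_coe.mpr h2).congr fun z => Real.coe_toNNReal _ (hTpos z)
  refine ⟨hsummable, ?_⟩
  have htsum_eq : ∑' z, T z = (∑' z, ENNReal.ofReal (T z)).toReal := by
    rw [ENNReal.tsum_toReal_eq (fun z => ENNReal.ofReal_ne_top)]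
    exact tsum_congr fun z => (ENNReal.toReal_ofReal (hTpos z)).symm
  have hstep : (∑' z, ENNReal.ofReal (T z)).toReal
      ≤ (Ce * (nu (x - y) : ℝ≥0∞) ^ ((6:ℝ) - d)).toReal :=
    ENNReal.toReal_mono hfin hsum_ofReal
  have hnuR : ((nu (x - y) : ℝ≥0∞)).toReal = (nu (x - y) : ℝ) := by simp
  have hcomp : (nu (x - y) : ℝ) ^ ((6:ℝ) - d)
      ≤ Real.sqrt d ^ ((d:ℝ) - 6) * max (latNorm (x - y)) 1 ^ ((6:ℝ) - d) := by
    have hM : max (latNorm (x - y)) 1 ≤ Real.sqrt d * nu (x - y) := max_latNorm_le hd _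
    have h0M : 0 < max (latNorm (x - y)) 1 := hM1 _
    have hkey : (Real.sqrt d * (nu (x - y) : ℝ)) ^ ((6:ℝ) - d)
        ≤ max (latNorm (x - y)) 1 ^ ((6:ℝ) - d) :=
      Real.rpow_le_rpow_of_nonpos h0M hM (by linarith)
    have hnupos : (0:ℝ) < (nu (x - y) : ℝ) :=
      by exact_mod_cast Nat.pos_of_ne_zero (nu_ne_zero _)
    have hsplit : (Real.sqrt d * (nu (x - y) : ℝ)) ^ ((6:ℝ) - d)
        = Real.sqrt d ^ ((6:ℝ) - d) * (nu (x - y) : ℝ) ^ ((6:ℝ) - d) :=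
      Real.mul_rpow (by positivity) (by positivity)
    have hmul := mul_le_mul_of_nonneg_left hkey
      (le_of_lt (Real.rpow_pos_of_pos (by linarith : (0:ℝ) < Real.sqrt d) ((d:ℝ) - 6)))
    rw [hsplit, ← mul_assoc, ← Real.rpow_add (by linarith : (0:ℝ) < Real.sqrt d)] at hmul
    rw [show ((d:ℝ) - 6) + ((6:ℝ) - d) = 0 by ring, Real.rpow_zero, one_mul] at hmul
    exact hmul
  calc ∑' z : Fin d → ℤ,
        max (latNorm (x - z)) 1 ^ ((2:ℝ) - d) * max (latNorm (z - y)) 1 ^ ((4:ℝ) - d)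
      = (∑' z, ENNReal.ofReal (T z)).toReal := htsum_eq
    _ ≤ (Ce * (nu (x - y) : ℝ≥0∞) ^ ((6:ℝ) - d)).toReal := hstep
    _ = Ce.toReal * (nu (x - y) : ℝ) ^ ((6:ℝ) - d) := by
        rw [ENNReal.toReal_mul, ← ENNReal.toReal_rpow, hnuR]
    _ ≤ (Ce.toReal + 1) *
          (Real.sqrt d ^ ((d:ℝ) - 6) * max (latNorm (x - y)) 1 ^ ((6:ℝ) - d)) := by
        exact mul_le_mul (by linarith) hcomp (Real.rpow_nonneg (by positivity) _) (by
          have := ENNReal.toReal_nonneg (a := Ce); linarith)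
    _ = Cr * max (latNorm (x - y)) 1 ^ ((6:ℝ) - d) := by rw [hCr]; ring
end
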